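/- arXiv:2601.15940 — 2 statements merged into one kernel-verified Lean document; each statement's English description precedes it below -/
import Mathlib

section
/- Let A be a layered automaton over a finite alphabet Σ, p a leaf state, x a priority, and let u·w be an infinite word admitting a run in ⟦A⟧ of the form p →u q →w, where every transition along u has priority ≥ x and every transition along the infinite run over w has priority ≥ x+1. Then the random walk of ⟦A⟧ over u·w starting from p almost surely eventually uses only transitions of priority ≥ x+1 (with probability 1 only finitely many transitions of priority ≤ x occur). -/
open scoped Classical

noncomputable section

/-! ### Infinite words and the parity condition -/

/-- The minimal value occurring infinitely often in a sequence of priorities;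
for (eventually) bounded sequences this is the `liminf`. -/
def minInfOften (pi : ℕ → ℕ) : ℕ := sInf {x : ℕ | ∀ N : ℕ, ∃ n : ℕ, N ≤ n ∧ pi n = x}

/-- The (min-)parity acceptance condition: the liminf of the priorities is even. -/
def ParityAccept (pi : ℕ → ℕ) : Prop := Even (minInfOften pi)

/-- Prepend a finite word to an infinite word. -/
def prependW {α : Type} (u : List α) (w : ℕ → α) : ℕ → α := fun i =>
  if h : i < u.length then u.get ⟨i, h⟩ else w (i - u.length)

/-- The prefix of length `n` of an infinite word, as a list. -/
def wordPrefix {α : Type} (w : ℕ → α) (n : ℕ) : List α := List.ofFn (fun i : Fin n => w i)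

/-- Drop the first `n` letters of an infinite word. -/
def wordDrop {α : Type} (w : ℕ → α) (n : ℕ) : ℕ → α := fun i => w (n + i)

/-- The periodic infinite word `v^ω` (junk if `v = []`). -/
def perWord {α : Type} [Inhabited α] (v : List α) : ℕ → α := fun i => v.getD (i % v.length) default

/-! ### Layered automata -/

/-- A layered automaton over the alphabet `α` with `d` layers.  The (disjoint) layers
are encoded by the function `layer : Q → [1,d]`; each layer is a deterministic
transition system (partial transition function `δ`, which stays inside the layer);
`μ` sends each state of layer `x+1` to its parent in layer `x` (and is the identity
on layer `1`) and is a morphism of transition systems; layer `1` is complete, carries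
the initial state, and all its states are reachable from the initial state. -/
structure Layered (Q α : Type) (d : ℕ) where
  layer : Q → ℕ
  layer_pos : ∀ q, 1 ≤ layer q
  layer_le : ∀ q, layer q ≤ d
  δ : Q → α → Option Q
  δ_layer : ∀ q a q', δ q a = some q' → layer q' = layer q
  μ : Q → Q
  μ_layer : ∀ q, 1 < layer q → layer (μ q) + 1 = layer q
  μ_id : ∀ q, layer q = 1 → μ q = q
  μ_morph : ∀ q a q', 1 < layer q → δ q a = some q' → δ (μ q) a = some (μ q')
  init : Q
  init_layer : layer init = 1
  complete1 : ∀ q a, layer q = 1 → (δ q a).isSome = true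
  reach1 : ∀ q, layer q = 1 →
    Relation.ReflTransGen (fun p p' => layer p = 1 ∧ ∃ a, δ p a = some p') init q

namespace Layered

variable {Q R α : Type} {d d' : ℕ}

/-- The run of the (deterministic) layer transition systems on a finite word. -/
def runList (A : Layered Q α d) : Q → List α → Option Q
  | q, [] => some q
  | q, a :: u =>
    match A.δ q a with
    | some q' => runList A q' u
    | none => none

/-- `μ̂_x q`: the ancestor of `q` in layer `x` (image under the composed morphisms). -/
def muHat (A : Layered Q α d) (x : ℕ) (q : Q) : Q := (A.μ)^[A.layer q - x] q

/-- A leaf state: a state that is not in the image of any of the morphisms `μ_x`. -/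
def IsLeaf (A : Layered Q α d) (q : Q) : Prop := ∀ p, 1 < A.layer p → A.μ p ≠ q

/-- `layer(q,a)`: the largest layer `x ≤ layer q` in which `δ_x (μ̂_x q) a` is defined. -/
def layerOf (A : Layered Q α d) (q : Q) (a : α) : ℕ :=
  Nat.findGreatest (fun x => (A.δ (A.muHat x q) a).isSome = true) (A.layer q)

/-- A state `p` is an ancestor of `q`. -/
def IsAncestor (A : Layered Q α d) (p q : Q) : Prop :=
  A.layer p ≤ A.layer q ∧ A.muHat (A.layer p) q = p

/-! #### Safe languages and strong acceptance -/

/-- Membership of a finite word in the `x`-safe language of `q`. -/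
def SafeFin (A : Layered Q α d) (x : ℕ) (q : Q) (u : List α) : Prop :=
  (A.runList (A.muHat x q) u).isSome = true

/-- Membership of an infinite word in the `x`-safe language of `q`. -/
def SafeInf (A : Layered Q α d) (x : ℕ) (q : Q) (w : ℕ → α) : Prop :=
  ∀ n : ℕ, A.SafeFin x q (wordPrefix w n)

/-- `w` is strongly accepted by the state `p` (which lies in the even layer `x = layer p`):
`w` is `x`-safe from `p` and no decomposition `w = u·w'` admits a state `p'` of layer `x+1`
with a `u`-run from `p` to the parent of `p'` in `T_x` such that `w'` is `(x+1)`-safe from `p'`. -/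
def StronglyAcc (A : Layered Q α d) (p : Q) (w : ℕ → α) : Prop :=
  Even (A.layer p) ∧ A.SafeInf (A.layer p) p w ∧
  ∀ (n : ℕ) (p' : Q), A.layer p' = A.layer p + 1 →
    A.runList p (wordPrefix w n) = some (A.μ p') →
    ¬ A.SafeInf (A.layer p') p' (wordDrop w n)

/-- `w` is strongly rejected by `p` (lying in an odd layer). -/
def StronglyRej (A : Layered Q α d) (p : Q) (w : ℕ → α) : Prop :=
  Odd (A.layer p) ∧ A.SafeInf (A.layer p) p w ∧
  ∀ (n : ℕ) (p' : Q), A.layer p' = A.layer p + 1 →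
    A.runList p (wordPrefix w n) = some (A.μ p') →
    ¬ A.SafeInf (A.layer p') p' (wordDrop w n)

/-- Consistency: no two states with the same layer-1 ancestor strongly accept
resp. strongly reject a common infinite word. -/
def Consistent (A : Layered Q α d) : Prop :=
  ¬ ∃ (p p' : Q) (w : ℕ → α), A.muHat 1 p = A.muHat 1 p' ∧
      A.StronglyAcc p w ∧ A.StronglyRej p' w

/-- `w` is ultimately safe in layer `x`, for the automaton started in the
layer-1 state `q0`. -/
def UltSafeFrom (A : Layered Q α d) (q0 : Q) (x : ℕ) (w : ℕ → α) : Prop :=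
  ∃ (n : ℕ) (p : Q), A.layer p = x ∧
    A.runList q0 (wordPrefix w n) = some (A.muHat 1 p) ∧
    A.SafeInf x p (wordDrop w n)

/-- Layered acceptance from `q0`: the maximal layer in which `w` is ultimately safe is even. -/
def LayeredAcceptFrom (A : Layered Q α d) (q0 : Q) (w : ℕ → α) : Prop :=
  ∃ x : ℕ, Even x ∧ A.UltSafeFrom q0 x w ∧ ∀ y : ℕ, A.UltSafeFrom q0 y w → y ≤ x

/-- Layered rejection from `q0`: the maximal layer in which `w` is ultimately safe is odd. -/
def LayeredRejectFrom (A : Layered Q α d) (q0 : Q) (w : ℕ → α) : Prop :=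
  ∃ x : ℕ, Odd x ∧ A.UltSafeFrom q0 x w ∧ ∀ y : ℕ, A.UltSafeFrom q0 y w → y ≤ x

/-! #### The semantics automaton `⟦A⟧` (a simple-by-priorities alternating parity automaton) -/

/-- The priority of the letter `a` in the state `q` of `⟦A⟧`. -/
def semPrio (A : Layered Q α d) (q : Q) (a : α) : ℕ := A.layerOf q a

/-- The transitions of `⟦A⟧` (between leaf states): `q —a→ q'` iff, for
`x = layer(q,a)`, we have `δ_x (μ̂_x q) a = μ̂_x q'`; the transition carries priority `x`. -/
def semStep (A : Layered Q α d) (q : Q) (a : α) (q' : Q) : Prop :=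
  A.IsLeaf q' ∧ A.δ (A.muHat (A.layerOf q a) q) a = some (A.muHat (A.layerOf q a) q')

/-- Runs of `⟦A⟧` over the infinite word `w`, starting in `p`. -/
def IsSemRun (A : Layered Q α d) (w : ℕ → α) (p : Q) (ρ : ℕ → Q) : Prop :=
  ρ 0 = p ∧ ∀ i : ℕ, A.semStep (ρ i) (w i) (ρ (i + 1))

/-- The sequence of priorities produced by a run of `⟦A⟧` over `w`. -/
def runPrios (A : Layered Q α d) (w : ℕ → α) (ρ : ℕ → Q) : ℕ → ℕ :=
  fun i => A.semPrio (ρ i) (w i)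

/-- A resolver for Eve in `⟦A⟧`: given the history (the finite run so far, as a list of
(state, letter) pairs), the current state and a letter of odd priority, it picks a successor. -/
def EveResolver (A : Layered Q α d) (σ : List (Q × α) → Q → α → Q) : Prop :=
  ∀ (h : List (Q × α)) (q : Q) (a : α), Odd (A.semPrio q a) → A.semStep q a (σ h q a)

/-- A resolver for Adam in `⟦A⟧` (resolving the even-priority steps). -/
def AdamResolver (A : Layered Q α d) (τ : List (Q × α) → Q → α → Q) : Prop :=
  ∀ (h : List (Q × α)) (q : Q) (a : α), Even (A.semPrio q a) → A.semStep q a (τ h q a)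

/-- A run is consistent with the Eve-resolver `σ`: every odd-priority step follows `σ`. -/
def ConsEve (A : Layered Q α d) (σ : List (Q × α) → Q → α → Q) (w : ℕ → α) (ρ : ℕ → Q) : Prop :=
  ∀ i : ℕ, Odd (A.semPrio (ρ i) (w i)) →
    ρ (i + 1) = σ (List.ofFn fun j : Fin i => (ρ (j : ℕ), w (j : ℕ))) (ρ i) (w i)

/-- A run is consistent with the Adam-resolver `τ`: every even-priority step follows `τ`. -/
def ConsAdam (A : Layered Q α d) (τ : List (Q × α) → Q → α → Q) (w : ℕ → α) (ρ : ℕ → Q) : Prop :=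
  ∀ i : ℕ, Even (A.semPrio (ρ i) (w i)) →
    ρ (i + 1) = τ (List.ofFn fun j : Fin i => (ρ (j : ℕ), w (j : ℕ))) (ρ i) (w i)

/-- Acceptance of `w` by `⟦A⟧` from the (leaf) state `p`: Eve has a winning strategy
in the game `G(⟦A⟧,w)`, i.e. a resolver all of whose consistent runs satisfy parity. -/
def SemAccept (A : Layered Q α d) (p : Q) (w : ℕ → α) : Prop :=
  ∃ σ : List (Q × α) → Q → α → Q, A.EveResolver σ ∧
    ∀ ρ : ℕ → Q, A.IsSemRun w p ρ → A.ConsEve σ w ρ → ParityAccept (A.runPrios w ρ)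

/-- Uniform semantic determinism: leaf states with the same layer-1 ancestor
recognise the same language in `⟦A⟧`. -/
def UnifSD (A : Layered Q α d) : Prop :=
  ∀ p q : Q, A.IsLeaf p → A.IsLeaf q → A.muHat 1 p = A.muHat 1 q →
    ∀ w : ℕ → α, (A.SemAccept p w ↔ A.SemAccept q w)

/-! #### Longest suffix resolvers -/

/-- `v` is a suffix-witness to `r`: the layer of `r` has a run labelled `v` ending in `r`. -/
def suffixReaches (A : Layered Q α d) (r : Q) (v : List α) : Prop :=
  ∃ p : Q, A.layer p = A.layer r ∧ A.runList p v = some r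

/-- The length of the longest suffix `v` of `u` such that the layer of `r` has a
run labelled `v` ending in `r`. -/
def longestSuffixLen (A : Layered Q α d) (u : List α) (r : Q) : ℕ :=
  Nat.findGreatest (fun k => k ≤ u.length ∧ A.suffixReaches r (u.drop (u.length - k))) u.length

/-- A longest suffix resolver for Eve, initialised to `u0`: a valid Eve-resolver that,
at a step of odd priority `x` after having read `v`, moves to an `a`-successor `q'`
maximising the length of the longest `(x+1)`-suffix of `u0·v·a` to `μ̂_{x+1} q'`. -/
def IsLongestSuffixResolverE (A : Layered Q α d) (u0 : List α)
    (σ : List (Q × α) → Q → α → Q) : Prop :=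
  A.EveResolver σ ∧
  ∀ (h : List (Q × α)) (q : Q) (a : α), Odd (A.semPrio q a) →
    ∀ q' : Q, A.semStep q a q' →
      A.longestSuffixLen (u0 ++ h.map Prod.snd ++ [a]) (A.muHat (A.semPrio q a + 1) q') ≤
      A.longestSuffixLen (u0 ++ h.map Prod.snd ++ [a]) (A.muHat (A.semPrio q a + 1) (σ h q a))

/-- A longest suffix resolver for Adam, initialised to `u0` (symmetric, for even priorities). -/
def IsLongestSuffixResolverA (A : Layered Q α d) (u0 : List α)
    (τ : List (Q × α) → Q → α → Q) : Prop :=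
  A.AdamResolver τ ∧
  ∀ (h : List (Q × α)) (q : Q) (a : α), Even (A.semPrio q a) →
    ∀ q' : Q, A.semStep q a q' →
      A.longestSuffixLen (u0 ++ h.map Prod.snd ++ [a]) (A.muHat (A.semPrio q a + 1) q') ≤
      A.longestSuffixLen (u0 ++ h.map Prod.snd ++ [a]) (A.muHat (A.semPrio q a + 1) (τ h q a))

/-! #### The random walk on `⟦A⟧` -/

/-- The uniform step probability of the random walk of `⟦A⟧`. -/
def stepProb (A : Layered Q α d) (q : Q) (a : α) (q' : Q) : ENNReal :=
  if A.semStep q a q' then ((Nat.card {p : Q // A.semStep q a p} : ENNReal))⁻¹ else 0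

/-- `m` is the Markov measure of the random walk of `⟦A⟧` over the word `w` started at `p`:
a probability measure on `ℕ → Q` whose cylinder probabilities are the products of the
uniform step probabilities. -/
def IsWalkMeasure [MeasurableSpace Q] (A : Layered Q α d) (w : ℕ → α) (p : Q)
    (m : MeasureTheory.Measure (ℕ → Q)) : Prop :=
  MeasureTheory.IsProbabilityMeasure m ∧
  ∀ (n : ℕ) (s : Fin (n + 1) → Q),
    m {ρ : ℕ → Q | ∀ i : Fin (n + 1), ρ (i : ℕ) = s i} =
      (if s 0 = p then 1 else 0) *
        ∏ i : Fin n, A.stepProb (s i.castSucc) (w (i : ℕ)) (s i.succ)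

/-! #### Normal form, centrality, safe minimality, central sequences -/

/-- Normal form: (N1) every layer `x ≥ 2` is a union of non-trivial SCCs, and
(N2) the safe language of every child is strictly smaller than that of its parent. -/
def NormalForm (A : Layered Q α d) : Prop :=
  ∀ q : Q, 2 ≤ A.layer q →
    (∀ (u : List α) (q' : Q), A.runList q u = some q' →
      ∃ v : List α, v ≠ [] ∧ A.runList q' v = some q) ∧
    (∀ p : Q, 1 < A.layer p → A.μ p = q →
      ∃ u : List α, (A.runList q u).isSome = true ∧ A.runList p u = none)

/-- Inclusion of `x`-safe languages. -/
def SafeLE (A : Layered Q α d) (x : ℕ) (p q : Q) : Prop :=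
  (∀ u : List α, A.SafeFin x p u → A.SafeFin x q u) ∧
  (∀ w : ℕ → α, A.SafeInf x p w → A.SafeInf x q w)

/-- Centralised: siblings (same parent) whose safe languages are included,
lie in the same SCC of their layer. -/
def Centralised (A : Layered Q α d) : Prop :=
  ∀ p q : Q, 2 ≤ A.layer p → A.layer q = A.layer p →
    A.muHat (A.layer p - 1) p = A.muHat (A.layer p - 1) q →
    A.SafeLE (A.layer p) p q →
    (∃ u : List α, A.runList p u = some q) ∧ (∃ v : List α, A.runList q v = some p)

/-- `L(p) = L(q)`: all leaves above (the layer-1 ancestor of) `p` and all leaves above `q`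
recognise the same language in `⟦A⟧`. -/
def LangEq1 (A : Layered Q α d) (p q : Q) : Prop :=
  ∀ l l' : Q, A.IsLeaf l → A.IsLeaf l' → A.muHat 1 l = A.muHat 1 p →
    A.muHat 1 l' = A.muHat 1 q → ∀ w : ℕ → α, (A.SemAccept l w ↔ A.SemAccept l' w)

/-- The equivalence `p ≈_x q`: language equivalence together with equality of all
`y`-safe languages for `2 ≤ y ≤ x`. -/
def ApproxEq (A : Layered Q α d) (x : ℕ) (p q : Q) : Prop :=
  A.LangEq1 p q ∧ ∀ y : ℕ, 2 ≤ y → y ≤ x →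
    ((∀ u : List α, A.SafeFin y p u ↔ A.SafeFin y q u) ∧
     (∀ w : ℕ → α, A.SafeInf y p w ↔ A.SafeInf y q w))

/-- Safe minimality: `≈_x`-equivalent states of the same layer are equal. -/
def SafeMinimal (A : Layered Q α d) : Prop :=
  ∀ p q : Q, A.layer p = A.layer q → A.ApproxEq (A.layer p) p q → p = q

/-- `z` is a central sequence for the state `p` (of layer `x = layer p`). -/
def IsCentralSeq (A : Layered Q α d) (p : Q) (z : List α) : Prop :=
  z ≠ [] ∧ A.runList p z = some p ∧
  (∀ q : Q, A.layer q = A.layer p →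
    A.muHat (A.layer p - 1) q = A.muHat (A.layer p - 1) p →
    (A.runList q z = some p ∨ A.runList q z = none)) ∧
  (∀ q' : Q, A.layer q' = A.layer p + 1 →
    A.muHat (A.layer p - 1) q' = A.muHat (A.layer p - 1) p →
    A.runList q' z = none)

end Layered

/-! ### Morphisms of layered automata -/

/-- A morphism of layered automata. -/
structure IsLayMorphism {Q R α : Type} {d d' : ℕ} (A : Layered Q α d) (B : Layered R α d')
    (φ : Q → R) : Prop where
  map_init : φ A.init = B.init
  map_step : ∀ q a q', A.δ q a = some q' → B.δ (φ q) a = some (φ q')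
  map_anc : ∀ p q, A.IsAncestor p q → B.IsAncestor (φ p) (φ q)

/-- A strong morphism of layered automata additionally preserves non-transitions. -/
def IsStrongLayMorphism {Q R α : Type} {d d' : ℕ} (A : Layered Q α d) (B : Layered R α d')
    (φ : Q → R) : Prop :=
  IsLayMorphism A B φ ∧ ∀ q a, A.δ q a = none → B.δ (φ q) a = none

/-- An isomorphism of layered automata: a bijection on states that restricts to
isomorphisms of the layer transition systems, preserves the initial state, and
commutes with the morphisms `μ`. -/
structure IsLayIso {Q R α : Type} {d d' : ℕ} (A : Layered Q α d) (B : Layered R α d')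
    (φ : Q ≃ R) : Prop where
  map_layer : ∀ q, B.layer (φ q) = A.layer q
  map_init : φ A.init = B.init
  map_mu : ∀ q, φ (A.μ q) = B.μ (φ q)
  map_step : ∀ q a, (A.δ q a).map φ = B.δ (φ q) a

/-- `L(⟦A⟧) = L(⟦B⟧)`: the semantics automata (with any choice of initial leaf states
above the respective initial states) accept the same infinite words. -/
def SemLangEq {Q R α : Type} {d d' : ℕ} (A : Layered Q α d) (B : Layered R α d') : Prop :=
  ∀ (p : Q) (q : R), A.IsLeaf p → A.muHat 1 p = A.init → B.IsLeaf q → B.muHat 1 q = B.init →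
    ∀ w : ℕ → α, (A.SemAccept p w ↔ B.SemAccept q w)

/-! ### Deterministic parity automata -/

/-- A deterministic parity automaton over `α` with priorities in `[1,d]`. -/
structure DPA (Q α : Type) (d : ℕ) where
  init : Q
  next : Q → α → Q
  prio : Q → α → ℕ
  prio_pos : ∀ q a, 1 ≤ prio q a
  prio_le : ∀ q a, prio q a ≤ d

namespace DPA

variable {Q α : Type} {d : ℕ}

/-- The unique run of a DPA on an infinite word. -/
def run (B : DPA Q α d) (w : ℕ → α) : ℕ → Q
  | 0 => B.init
  | n + 1 => B.next (run B w n) (w n)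

/-- Acceptance by a DPA: the priorities along the unique run satisfy parity. -/
def Accepts (B : DPA Q α d) (w : ℕ → α) : Prop :=
  ParityAccept (fun i => B.prio (B.run w i) (w i))

end DPA

/-- `L` is ω-regular: recognised by some deterministic parity automaton. -/
def IsOmegaRegular {α : Type} (L : Set (ℕ → α)) : Prop :=
  ∃ (n d : ℕ) (B : DPA (Fin n) α d), ∀ w : ℕ → α, w ∈ L ↔ B.Accepts w

/-! ### Nondeterministic coBüchi automata -/

/-- A (complete) nondeterministic coBüchi automaton: transitions carry priorities in `{1,2}`. -/
structure NCA (Q α : Type) where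
  init : Q
  trans : Q → α → ℕ → Q → Prop
  prio_mem : ∀ q a x q', trans q a x q' → x = 1 ∨ x = 2
  complete : ∀ q a, ∃ x q', trans q a x q'

namespace NCA

variable {Q α : Type}

/-- Nondeterministic acceptance from the state `q`. -/
def AcceptFrom (B : NCA Q α) (q : Q) (w : ℕ → α) : Prop :=
  ∃ (ρ : ℕ → Q) (pri : ℕ → ℕ), ρ 0 = q ∧
    (∀ i : ℕ, B.trans (ρ i) (w i) (pri i) (ρ (i + 1))) ∧ ParityAccept pri

/-- Semantic determinism: every `a`-successor of `p` recognises `a⁻¹ L(p)`. -/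
def SemDet (B : NCA Q α) : Prop :=
  ∀ p a x q, B.trans p a x q →
    ∀ w : ℕ → α, (B.AcceptFrom q w ↔ B.AcceptFrom p (prependW [a] w))

/-- Safe determinism: all `a`-transitions from a state carry the same priority, and
there is at most one `a`-transition of priority `2` from each state. -/
def SafeDet (B : NCA Q α) : Prop :=
  (∀ q a x q' x' q'', B.trans q a x q' → B.trans q a x' q'' → x = x') ∧
  (∀ q a q' q'', B.trans q a 2 q' → B.trans q a 2 q'' → q' = q'')

/-- 1-saturation: priority-1 transitions go to all language-equivalent states. -/
def OneSaturated (B : NCA Q α) : Prop :=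
  ∀ q a p p', B.trans q a 1 p →
    (∀ w : ℕ → α, (B.AcceptFrom p' w ↔ B.AcceptFrom p w)) → B.trans q a 1 p'

end NCA

/-! ### Simple-by-priorities alternating parity automata (abstract) -/

/-- A simple-by-priorities alternating parity automaton: a complete transition system
over `α × [1,d]` in which all `a`-transitions from a state carry the same priority. -/
structure SPA (Q α : Type) (d : ℕ) where
  init : Q
  step : Q → α → Q → Prop
  prio : Q → α → ℕ
  prio_pos : ∀ q a, 1 ≤ prio q a
  prio_le : ∀ q a, prio q a ≤ d
  complete : ∀ q a, ∃ q', step q a q'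

/-! ### The congruence on tuples of finite words -/

/-- The data of the congruence at one level (tuples of a fixed length,
represented as reversed lists of components: the head is the last component). -/
structure CongrLevel (α : Type) where
  bot : List (List α) → Prop
  eq : List (List α) → List (List α) → Prop
  ptd : List (List α) → Prop

/-- Concatenate a finite word to the last component of a tuple
(tuples are represented as reversed lists: the head is the last component). -/
def tcat {α : Type} (t : List (List α)) (v : List α) : List (List α) :=
  match t with
  | h :: rest => (h ++ v) :: rest
  | [] => []

/-- Merge the last two components of a tuple. -/
def tmerge {α : Type} (t : List (List α)) : List (List α) :=
  match t with
  | u' :: h :: rest => (h ++ u') :: rest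
  | t' => t'

/-- The congruence data at level `n` (handling tuples of length `n+1`), defined by
recursion on the level, following the inductive definition of `≈ ⊥`, `≈` and `pointed`. -/
def congrData {α : Type} [Inhabited α] (L : Set (ℕ → α)) : ℕ → CongrLevel α
  | 0 =>
    { bot := fun _ => False
      eq := fun t s =>
        match t, s with
        | [u], [v] => ∀ w : ℕ → α, (prependW u w ∈ L ↔ prependW v w ∈ L)
        | _, _ => False
      ptd := fun _ => True }
  | n + 1 =>
    let C := congrData L n
    let bot : List (List α) → Prop := fun t =>
      match t with
      | u' :: ubar =>
        C.bot (tmerge (u' :: ubar)) ∨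
        ∀ w : List α, w ≠ [] → C.eq (tcat (tmerge (u' :: ubar)) w) ubar →
          ((prependW ubar.reverse.flatten (perWord (u' ++ w)) ∈ L) ↔ Even (n + 1))
      | [] => True
    let eq : List (List α) → List (List α) → Prop := fun t s =>
      C.eq (tmerge t) (tmerge s) ∧ ∀ v : List α, (bot (tcat t v) ↔ bot (tcat s v))
    let ptd : List (List α) → Prop := fun t =>
      match t with
      | u' :: ubar =>
        ¬ bot (u' :: ubar) ∧ C.ptd ubar ∧
        ∀ (vbar : List (List α)) (v' : List α), vbar.length = n + 1 → C.ptd vbar →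
          C.eq (tcat vbar v') ubar → ¬ bot ((v' ++ u') :: vbar) →
          eq ((v' ++ u') :: vbar) (u' :: ubar)
      | [] => False
    { bot := bot, eq := eq, ptd := ptd }

/-- `t ≈ ⊥` (for a nonempty tuple `t`, in reversed representation). -/
def TupBot {α : Type} [Inhabited α] (L : Set (ℕ → α)) (t : List (List α)) : Prop :=
  (congrData L (t.length - 1)).bot t

/-- `t ≈ s` (for nonempty tuples of the same length, in reversed representation). -/
def TupEq {α : Type} [Inhabited α] (L : Set (ℕ → α)) (t s : List (List α)) : Prop :=
  t.length = s.length ∧ (congrData L (t.length - 1)).eq t s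

/-- `t` is pointed. -/
def TupPointed {α : Type} [Inhabited α] (L : Set (ℕ → α)) (t : List (List α)) : Prop :=
  (congrData L (t.length - 1)).ptd t

/-- `cls` exhibits `A` as (a copy of) the congruence automaton `A_≈` of `L`: its states
are the `≈`-classes of pointed tuples (the layer being the tuple length), transitions
are given by concatenation in the last component, the initial state is the class of
`(ε)`, and the morphisms are given by merging the last two components. -/
structure IsCongrAut {α : Type} [Inhabited α] (L : Set (ℕ → α)) {Q : Type} {d : ℕ}
    (A : Layered Q α d) (cls : (t : List (List α)) → TupPointed L t → Q) : Prop where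
  surj : ∀ q : Q, ∃ (t : List (List α)) (ht : TupPointed L t), cls t ht = q
  cls_eq : ∀ t ht s hs, cls t ht = cls s hs ↔ TupEq L t s
  layer_eq : ∀ t ht, A.layer (cls t ht) = t.length
  init_eq : ∀ h : TupPointed L [([] : List α)], cls [([] : List α)] h = A.init
  step_some : ∀ t ht (a : α) (h' : TupPointed L (tcat t [a])),
    A.δ (cls t ht) a = some (cls (tcat t [a]) h')
  step_none : ∀ t ht (a : α), TupBot L (tcat t [a]) → A.δ (cls t ht) a = none
  mu_eq : ∀ (u' : List α) (ubar : List (List α)) (h : TupPointed L (u' :: ubar))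
    (h' : TupPointed L (tmerge (u' :: ubar))), ubar ≠ [] →
    A.μ (cls (u' :: ubar) h) = cls (tmerge (u' :: ubar)) h'

end
noncomputable section
namespace Layered

variable {Q α : Type} {d : ℕ}

lemma iter_layer (A : Layered Q α d) (q : Q) :
    ∀ k, k < A.layer q → A.layer ((A.μ)^[k] q) = A.layer q - k := by
  intro k
  induction k with
  | zero => intro _; simp
  | succ k ih =>
    intro hk
    rw [Function.iterate_succ_apply']
    have h1 : A.layer ((A.μ)^[k] q) = A.layer q - k := ih (by omega)
    have h2 : 1 < A.layer ((A.μ)^[k] q) := by omega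
    have := A.μ_layer _ h2
    omega

lemma muHat_layer (A : Layered Q α d) (q : Q) (z : ℕ) (h1 : 1 ≤ z) (h2 : z ≤ A.layer q) :
    A.layer (A.muHat z q) = z := by
  unfold muHat
  rcases Nat.eq_or_lt_of_le h2 with h | h
  · simp [h]
  · rw [iter_layer A q _ (by omega)]; omega

lemma muHat_muHat (A : Layered Q α d) (q : Q) (y z : ℕ) (hy : y ≤ z) (hz : z ≤ A.layer q) :
    (A.μ)^[z - y] (A.muHat z q) = A.muHat y q := by
  unfold muHat
  rw [← Function.iterate_add_apply]
  congr 1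
  omega

lemma delta_iter_morph (A : Layered Q α d) (q0 q0' : Q) (a : α) (h : A.δ q0 a = some q0') :
    ∀ k, k < A.layer q0 → A.δ ((A.μ)^[k] q0) a = some ((A.μ)^[k] q0') := by
  intro k
  induction k with
  | zero => intro _; simpa
  | succ k ih =>
    intro hk
    have h1 := ih (by omega)
    have h2 : 1 < A.layer ((A.μ)^[k] q0) := by
      rw [iter_layer A q0 k (by omega)]; omega
    rw [Function.iterate_succ_apply', Function.iterate_succ_apply']
    exact A.μ_morph _ _ _ h2 h1

lemma layerOf_le (A : Layered Q α d) (q : Q) (a : α) : A.layerOf q a ≤ A.layer q :=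
  Nat.findGreatest_le _

lemma layerOf_ge (A : Layered Q α d) (q : Q) (a : α) (y : ℕ) (h2 : y ≤ A.layer q)
    (h3 : (A.δ (A.muHat y q) a).isSome = true) : y ≤ A.layerOf q a :=
  Nat.le_findGreatest h2 h3

lemma layer_muHat_eq_of_le (A : Layered Q α d) (q q' : Q) (z : ℕ) (h1 : 1 ≤ z)
    (hz : z ≤ A.layer q) (h : A.layer (A.muHat z q') = z) : z ≤ A.layer q' := by
  by_contra hlt
  push_neg at hlt
  have : A.muHat z q' = q' := by
    unfold muHat
    have : A.layer q' - z = 0 := by omega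
    rw [this]; rfl
  rw [this] at h
  omega

/-- Key projection lemma: a semantic step projects to layer `y` transitions. -/
lemma semStep_proj (A : Layered Q α d) (q q' : Q) (a : α) (y : ℕ) (h1 : 1 ≤ y)
    (h2 : y ≤ A.layerOf q a) (h : A.semStep q a q') :
    A.layerOf q a ≤ A.layer q' ∧ A.δ (A.muHat y q) a = some (A.muHat y q') := by
  set z := A.layerOf q a with hz
  have hzq : z ≤ A.layer q := A.layerOf_le q a
  have hstep : A.δ (A.muHat z q) a = some (A.muHat z q') := h.2
  have hlq : A.layer (A.muHat z q) = z := A.muHat_layer q z (by omega) hzq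
  have hlq' : A.layer (A.muHat z q') = z := by
    rw [A.δ_layer _ _ _ hstep, hlq]
  have hzq' : z ≤ A.layer q' := A.layer_muHat_eq_of_le q q' z (by omega) hzq hlq'
  refine ⟨hzq', ?_⟩
  have := A.delta_iter_morph _ _ a hstep (z - y) (by omega)
  rwa [A.muHat_muHat q y z h2 hzq, A.muHat_muHat q' y z h2 hzq'] at this

lemma exists_leaf_above (A : Layered Q α d) (r : Q) :
    ∃ q', A.IsLeaf q' ∧ A.layer r ≤ A.layer q' ∧ A.muHat (A.layer r) q' = r := by
  by_cases hle : A.layer r ≤ d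
  swap
  · exact absurd (A.layer_le r) hle
  have : ∀ n (r : Q), d - A.layer r ≤ n →
      ∃ q', A.IsLeaf q' ∧ A.layer r ≤ A.layer q' ∧ A.muHat (A.layer r) q' = r := by
    intro n
    induction n with
    | zero =>
      intro r hr
      have hleaf : A.IsLeaf r := by
        intro pp hpp hmu
        have h1 := A.μ_layer pp hpp
        rw [hmu] at h1
        have h2 := A.layer_le pp
        omega
      exact ⟨r, hleaf, le_rfl, by unfold muHat; simp⟩
    | succ n ih =>
      intro r hr
      by_cases hleaf : A.IsLeaf r
      · exact ⟨r, hleaf, le_rfl, by unfold muHat; simp⟩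
      · unfold IsLeaf at hleaf
        push_neg at hleaf
        obtain ⟨pp, hpp, hmu⟩ := hleaf
        have hlp : A.layer pp = A.layer r + 1 := by
          have := A.μ_layer pp hpp; rw [hmu] at this; omega
        have hlpd : A.layer pp ≤ d := A.layer_le pp
        obtain ⟨q', hq'leaf, hq'ge, hq'mu⟩ := ih pp (by omega)
        refine ⟨q', hq'leaf, by omega, ?_⟩
        have harith : A.layer q' - A.layer r = (A.layer q' - A.layer pp) + 1 := by omega
        unfold muHat at hq'mu ⊢
        rw [harith, Function.iterate_succ_apply', hq'mu]
        rw [hlp] at hq'mu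
        rw [← hmu]
  exact this (d - A.layer r) r le_rfl

lemma layerOf_pos (A : Layered Q α d) (q : Q) (a : α) : 1 ≤ A.layerOf q a := by
  apply A.layerOf_ge q a 1 (A.layer_pos q)
  have h1 : A.layer (A.muHat 1 q) = 1 := A.muHat_layer q 1 le_rfl (A.layer_pos q)
  exact A.complete1 _ a h1

lemma semStep_complete (A : Layered Q α d) (q : Q) (a : α) : ∃ q', A.semStep q a q' := by
  have h1 := A.layerOf_pos q a
  set z := A.layerOf q a with hz
  have hzq : z ≤ A.layer q := A.layerOf_le q a
  have hspec : (A.δ (A.muHat z q) a).isSome = true := by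
    have h1' : A.layer (A.muHat 1 q) = 1 := A.muHat_layer q 1 le_rfl (A.layer_pos q)
    exact Nat.findGreatest_spec (P := fun x => (A.δ (A.muHat x q) a).isSome = true)
      (A.layer_pos q) (A.complete1 _ a h1')
  obtain ⟨r, hr⟩ := Option.isSome_iff_exists.mp hspec
  have hlr : A.layer r = z := by
    rw [A.δ_layer _ _ _ hr, A.muHat_layer q z h1 hzq]
  obtain ⟨q', hleaf, hge, hmu⟩ := A.exists_leaf_above r
  rw [hlr] at hmu
  exact ⟨q', hleaf, by rw [hr, hmu]⟩

end Layered
end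
noncomputable section
namespace Layered

variable {Q α : Type} {d : ℕ}

lemma stepProb_of_not (A : Layered Q α d) {q q' : Q} {a : α} (h : ¬ A.semStep q a q') :
    A.stepProb q a q' = 0 := by simp [stepProb, h]

lemma stepProb_le_one [Fintype Q] (A : Layered Q α d) (q : Q) (a : α) (q' : Q) :
    A.stepProb q a q' ≤ 1 := by
  unfold stepProb
  split
  · rename_i h
    have : Nonempty {p : Q // A.semStep q a p} := ⟨⟨q', h⟩⟩
    have hc : 1 ≤ Nat.card {p : Q // A.semStep q a p} := Nat.card_pos
    rw [ENNReal.inv_le_one]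
    exact_mod_cast hc
  · exact zero_le_one

lemma sum_stepProb [Fintype Q] (A : Layered Q α d) (q : Q) (a : α) :
    ∑ q' : Q, A.stepProb q a q' = 1 := by
  classical
  have hcard : (Finset.univ.filter (fun q' => A.semStep q a q')).card =
      Nat.card {p : Q // A.semStep q a p} := by
    rw [Nat.card_eq_fintype_card, Fintype.card_subtype]
  have h1 : ∑ q' : Q, A.stepProb q a q' =
      ∑ q' ∈ Finset.univ.filter (fun q' => A.semStep q a q'),
        ((Nat.card {p : Q // A.semStep q a p} : ENNReal))⁻¹ := by
    rw [Finset.sum_filter]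
    rfl
  rw [h1, Finset.sum_const, hcard, nsmul_eq_mul]
  have hne : Nonempty {p : Q // A.semStep q a p} := by
    obtain ⟨q', h⟩ := A.semStep_complete q a
    exact ⟨⟨q', h⟩⟩
  have hc0 : Nat.card {p : Q // A.semStep q a p} ≠ 0 := Nat.card_pos.ne'
  exact ENNReal.mul_inv_cancel (by exact_mod_cast hc0) (ENNReal.natCast_ne_top _)

lemma sum_stepProb_le_one [Fintype Q] (A : Layered Q α d) (q : Q) (a : α) :
    ∑ q' : Q, A.stepProb q a q' ≤ 1 := le_of_eq (A.sum_stepProb q a)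

lemma inv_card_le_stepProb [Fintype Q] (A : Layered Q α d) {q q' : Q} {a : α}
    (h : A.semStep q a q') : ((Fintype.card Q : ENNReal))⁻¹ ≤ A.stepProb q a q' := by
  unfold stepProb
  rw [if_pos h]
  apply ENNReal.inv_le_inv'
  have : Nat.card {p : Q // A.semStep q a p} ≤ Fintype.card Q := by
    rw [Nat.card_eq_fintype_card]
    exact Fintype.card_subtype_le _
  exact_mod_cast this

end Layered

/-! ### The specific-run development -/

section St4

open Layered

variable {Q α : Type} {d : ℕ}

/-- Hypotheses bundle for statement 4. -/
structure St4 (A : Layered Q α d) (aw : ℕ → α) (p : Q) (ρ0 : ℕ → Q) (x L : ℕ) : Prop where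
  hx1 : 1 ≤ x
  run0 : ρ0 0 = p
  step : ∀ n, A.semStep (ρ0 n) (aw n) (ρ0 (n+1))
  prio_ge : ∀ n, x ≤ A.semPrio (ρ0 n) (aw n)
  prio_gt : ∀ n, L ≤ n → x + 1 ≤ A.semPrio (ρ0 n) (aw n)

variable {A : Layered Q α d} {aw : ℕ → α} {p : Q} {ρ0 : ℕ → Q} {x L : ℕ}

/-- The layer-`x` agreement invariant. -/
def StInv (A : Layered Q α d) (ρ0 : ℕ → Q) (x : ℕ) (n : ℕ) (q : Q) : Prop :=
  x ≤ A.layer q ∧ A.muHat x q = A.muHat x (ρ0 n)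

/-- The layer-`x+1` agreement ("good") predicate. -/
def StGood (A : Layered Q α d) (ρ0 : ℕ → Q) (x : ℕ) (n : ℕ) (q : Q) : Prop :=
  x + 1 ≤ A.layer q ∧ A.muHat (x+1) q = A.muHat (x+1) (ρ0 n)

lemma St4.proj_x (S : St4 A aw p ρ0 x L) (n : ℕ) :
    A.δ (A.muHat x (ρ0 n)) (aw n) = some (A.muHat x (ρ0 (n+1))) :=
  (A.semStep_proj _ _ _ x S.hx1 (S.prio_ge n) (S.step n)).2

lemma St4.proj_x1 (S : St4 A aw p ρ0 x L) (n : ℕ) (hn : L ≤ n) :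
    A.δ (A.muHat (x+1) (ρ0 n)) (aw n) = some (A.muHat (x+1) (ρ0 (n+1))) :=
  (A.semStep_proj _ _ _ (x+1) (by omega) (S.prio_gt n hn) (S.step n)).2

lemma St4.layer1_x1 (S : St4 A aw p ρ0 x L) (n : ℕ) (hn : L ≤ n) :
    x + 1 ≤ A.layer (ρ0 (n+1)) :=
  le_trans (S.prio_gt n hn) (A.semStep_proj _ _ _ (x+1) (by omega) (S.prio_gt n hn) (S.step n)).1

/-- Invariant initialisation. -/
lemma St4.inv_zero (S : St4 A aw p ρ0 x L) : StInv A ρ0 x 0 p := by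
  constructor
  · rw [← S.run0]
    exact le_trans (S.prio_ge 0) (A.layerOf_le _ _)
  · rw [S.run0]

/-- Invariant preservation, plus the priority lower bound. -/
lemma St4.inv_step (S : St4 A aw p ρ0 x L) {n : ℕ} {q q' : Q} (hI : StInv A ρ0 x n q)
    (hs : A.semStep q (aw n) q') :
    x ≤ A.layerOf q (aw n) ∧ StInv A ρ0 x (n+1) q' := by
  have hx : x ≤ A.layerOf q (aw n) := by
    apply A.layerOf_ge _ _ x hI.1
    rw [hI.2, S.proj_x n]; rfl
  obtain ⟨hlay, hδ⟩ := A.semStep_proj _ _ _ x S.hx1 hx hs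
  refine ⟨hx, le_trans hx hlay, ?_⟩
  have h2 : A.δ (A.muHat x (ρ0 n)) (aw n) = some (A.muHat x q') := by
    rw [← hI.2]; exact hδ
  exact Option.some_injective _ (h2.symm.trans (S.proj_x n))

/-- Goodness preservation, plus the strict priority lower bound. -/
lemma St4.good_step (S : St4 A aw p ρ0 x L) {n : ℕ} {q q' : Q} (hn : L ≤ n)
    (hG : StGood A ρ0 x n q) (hs : A.semStep q (aw n) q') :
    x + 1 ≤ A.layerOf q (aw n) ∧ StGood A ρ0 x (n+1) q' := by
  have hx : x + 1 ≤ A.layerOf q (aw n) := by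
    apply A.layerOf_ge _ _ (x+1) hG.1
    rw [hG.2, S.proj_x1 n hn]; rfl
  obtain ⟨hlay, hδ⟩ := A.semStep_proj _ _ _ (x+1) (by omega) hx hs
  refine ⟨hx, le_trans hx hlay, ?_⟩
  have h2 : A.δ (A.muHat (x+1) (ρ0 n)) (aw n) = some (A.muHat (x+1) q') := by
    rw [← hG.2]; exact hδ
  exact Option.some_injective _ (h2.symm.trans (S.proj_x1 n hn))

/-- High priority from goodness. -/
lemma St4.good_prio (S : St4 A aw p ρ0 x L) {n : ℕ} {q : Q} (hn : L ≤ n)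
    (hG : StGood A ρ0 x n q) : x + 1 ≤ A.layerOf q (aw n) := by
  apply A.layerOf_ge _ _ (x+1) hG.1
  rw [hG.2, S.proj_x1 n hn]; rfl

/-- Recovery: from a low step, the reference run's next state is a good successor. -/
lemma St4.recovery (S : St4 A aw p ρ0 x L) {n : ℕ} {q : Q} (hn : L ≤ n)
    (hI : StInv A ρ0 x n q) (hlow : A.layerOf q (aw n) ≤ x) :
    A.semStep q (aw n) (ρ0 (n+1)) ∧ StGood A ρ0 x (n+1) (ρ0 (n+1)) := by
  have hx : x ≤ A.layerOf q (aw n) := by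
    apply A.layerOf_ge _ _ x hI.1
    rw [hI.2, S.proj_x n]; rfl
  have hEq : A.layerOf q (aw n) = x := le_antisymm hlow hx
  constructor
  · refine ⟨(S.step n).1, ?_⟩
    rw [hEq, hI.2, S.proj_x n]
  · exact ⟨S.layer1_x1 n hn, rfl⟩

end St4
end
noncomputable section
section St4b
open Layered

variable {Q α : Type} [Fintype Q] {d : ℕ}

/-- Low-priority predicate at time `n`. -/
def stLow (A : Layered Q α d) (aw : ℕ → α) (x n : ℕ) (q : Q) : Prop :=
  A.semPrio q (aw n) ≤ x

/-- Number of low positions `≥ L` in a finite prefix. -/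
def stCnt (A : Layered Q α d) (aw : ℕ → α) (x L n : ℕ) (s : Fin (n+1) → Q) : ℕ :=
  (Finset.univ.filter (fun i : Fin (n+1) => L ≤ (i : ℕ) ∧ stLow A aw x (i : ℕ) (s i))).card

/-- Cylinder probability of a finite prefix. -/
def stVal (A : Layered Q α d) (aw : ℕ → α) (p : Q) (n : ℕ) (s : Fin (n+1) → Q) : ENNReal :=
  (if s 0 = p then 1 else 0) *
    ∏ i : Fin n, A.stepProb (s i.castSucc) (aw (i : ℕ)) (s i.succ)

/-- Escape probability bound. -/
def stR (Q : Type) [Fintype Q] : ENNReal := 1 - ((Fintype.card Q : ENNReal))⁻¹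

/-- The potential function. -/
def stPhi (A : Layered Q α d) (aw : ℕ → α) (ρ0 : ℕ → Q) (x L k n : ℕ)
    (s : Fin (n+1) → Q) : ENNReal :=
  if k ≤ stCnt A aw x L n s then 1
  else if L ≤ n ∧ StGood A ρ0 x n (s (Fin.last n)) then 0
  else if L ≤ n ∧ stLow A aw x n (s (Fin.last n)) then stR Q ^ (k - stCnt A aw x L n s)
  else stR Q ^ (k - stCnt A aw x L n s - 1)

lemma stR_le_one : stR Q ≤ 1 := tsub_le_self

lemma stR_pow_le_one (n : ℕ) : stR Q ^ n ≤ 1 := pow_le_one' stR_le_one n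

lemma stR_pow_anti {m n : ℕ} (h : m ≤ n) : stR Q ^ n ≤ stR Q ^ m := by
  have : stR Q ^ n = stR Q ^ m * stR Q ^ (n - m) := by
    rw [← pow_add]; congr 1; omega
  rw [this]
  calc stR Q ^ m * stR Q ^ (n - m) ≤ stR Q ^ m * 1 :=
        mul_le_mul_right (stR_pow_le_one _) _
    _ = stR Q ^ m := mul_one _

variable {A : Layered Q α d} {aw : ℕ → α} {p : Q} {ρ0 : ℕ → Q} {x L : ℕ}

lemma stPhi_le_one (k n : ℕ) (s : Fin (n+1) → Q) : stPhi A aw ρ0 x L k n s ≤ 1 := by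
  unfold stPhi
  split
  · exact le_rfl
  split
  · exact zero_le_one
  split
  · exact stR_pow_le_one _
  · exact stR_pow_le_one _

lemma stCnt_snoc (n : ℕ) (s : Fin (n+1) → Q) (q' : Q) :
    stCnt A aw x L (n+1) (Fin.snoc s q') =
      stCnt A aw x L n s + (if L ≤ n+1 ∧ stLow A aw x (n+1) q' then 1 else 0) := by
  classical
  rw [stCnt, stCnt, Finset.card_filter, Finset.card_filter, Fin.sum_univ_castSucc]
  congr 1
  · apply Finset.sum_congr rfl
    intro i _
    simp [Fin.snoc_castSucc]
  · simp [Fin.snoc_last]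

lemma stVal_snoc (n : ℕ) (s : Fin (n+1) → Q) (q' : Q) :
    stVal A aw p (n+1) (Fin.snoc s q') =
      stVal A aw p n s * A.stepProb (s (Fin.last n)) (aw n) q' := by
  rw [stVal, stVal, Fin.prod_univ_castSucc]
  have h0 : (Fin.snoc s q' : Fin (n+2) → Q) 0 = s 0 := by
    have h : (0 : Fin (n+2)) = Fin.castSucc 0 := rfl
    rw [h, Fin.snoc_castSucc]
  have hprod : ∀ i : Fin n,
      A.stepProb ((Fin.snoc s q' : Fin (n+2) → Q) i.castSucc.castSucc)
        (aw ((i.castSucc : ℕ))) ((Fin.snoc s q' : Fin (n+2) → Q) i.castSucc.succ) =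
      A.stepProb (s i.castSucc) (aw (i : ℕ)) (s i.succ) := by
    intro i
    rw [Fin.succ_castSucc, Fin.snoc_castSucc, Fin.snoc_castSucc, Fin.coe_castSucc]
  have hlast : (Fin.last n).succ = Fin.last (n+1) := Fin.succ_last n
  rw [h0]
  rw [Finset.prod_congr rfl (fun i _ => hprod i)]
  rw [hlast, Fin.snoc_last, Fin.snoc_castSucc, Fin.val_last]
  ring

lemma stVal_valid (n : ℕ) (s : Fin (n+1) → Q) (h : stVal A aw p n s ≠ 0) :
    s 0 = p ∧ ∀ i : Fin n, A.semStep (s i.castSucc) (aw (i : ℕ)) (s i.succ) := by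
  constructor
  · by_contra h0
    exact h (by rw [stVal, if_neg h0, zero_mul])
  · intro i
    by_contra hst
    apply h
    rw [stVal]
    apply mul_eq_zero_of_right
    exact Finset.prod_eq_zero (Finset.mem_univ i) (A.stepProb_of_not hst)

lemma St4.inv_prefix (S : St4 A aw p ρ0 x L) (n : ℕ) (s : Fin (n+1) → Q)
    (h0 : s 0 = p) (hstep : ∀ i : Fin n, A.semStep (s i.castSucc) (aw (i : ℕ)) (s i.succ)) :
    ∀ j : ℕ, (hj : j ≤ n) → StInv A ρ0 x j (s ⟨j, by omega⟩) := by
  intro j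
  induction j with
  | zero =>
    intro _
    have : s ⟨0, by omega⟩ = p := h0
    rw [this]
    exact S.inv_zero
  | succ j ih =>
    intro hj
    have hjn : j < n := by omega
    have hst := hstep ⟨j, hjn⟩
    have hcast : (Fin.castSucc ⟨j, hjn⟩ : Fin (n+1)) = ⟨j, by omega⟩ := rfl
    have hsucc : (Fin.succ ⟨j, hjn⟩ : Fin (n+1)) = ⟨j+1, by omega⟩ := rfl
    rw [hcast, hsucc] at hst
    exact (S.inv_step (ih (by omega)) hst).2

/-- The key one-step inequality for the potential. -/
lemma St4.key (S : St4 A aw p ρ0 x L) (k n : ℕ) (hk : 1 ≤ k) (s : Fin (n+1) → Q)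
    (h0 : s 0 = p) (hstep : ∀ i : Fin n, A.semStep (s i.castSucc) (aw (i : ℕ)) (s i.succ)) :
    ∑ q' : Q, A.stepProb (s (Fin.last n)) (aw n) q' * stPhi A aw ρ0 x L k (n+1) (Fin.snoc s q')
      ≤ stPhi A aw ρ0 x L k n s := by
  classical
  set q := s (Fin.last n) with hq
  set c := stCnt A aw x L n s with hc
  have hInv : StInv A ρ0 x n q := by
    have := S.inv_prefix n s h0 hstep n le_rfl
    have hlast : (⟨n, by omega⟩ : Fin (n+1)) = Fin.last n := rfl
    rwa [hlast] at this
  by_cases h1 : k ≤ c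
  · -- case 1 : already k lows
    rw [stPhi, if_pos h1]
    calc ∑ q' : Q, A.stepProb q (aw n) q' * stPhi A aw ρ0 x L k (n+1) (Fin.snoc s q')
        ≤ ∑ q' : Q, A.stepProb q (aw n) q' * 1 :=
          Finset.sum_le_sum fun q' _ => mul_le_mul_right (stPhi_le_one _ _ _) _
      _ = ∑ q' : Q, A.stepProb q (aw n) q' := by simp
      _ ≤ 1 := A.sum_stepProb_le_one q (aw n)
  by_cases h2 : L ≤ n ∧ StGood A ρ0 x n q
  · -- case 2 : currently good
    rw [stPhi, if_neg h1, if_pos h2]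
    apply le_of_eq
    apply Finset.sum_eq_zero
    intro q' _
    by_cases hs : A.semStep q (aw n) q'
    · obtain ⟨_, hG'⟩ := S.good_step h2.1 h2.2 hs
      have hnl : ¬ stLow A aw x (n+1) q' := by
        have := S.good_prio (by omega) hG'
        unfold stLow semPrio
        omega
      have hcnt : stCnt A aw x L (n+1) (Fin.snoc s q') = c := by
        rw [stCnt_snoc, if_neg (by tauto), add_zero]
      have : stPhi A aw ρ0 x L k (n+1) (Fin.snoc s q') = 0 := by
        rw [stPhi, hcnt, if_neg h1, if_pos ⟨by omega, by rwa [Fin.snoc_last]⟩]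
      rw [this, mul_zero]
    · rw [A.stepProb_of_not hs, zero_mul]
  by_cases h3 : L ≤ n ∧ stLow A aw x n q
  · -- case 3 : currently low, recovery argument
    rw [stPhi, if_neg h1, if_neg h2, if_pos h3]
    obtain ⟨hsg, hGg⟩ := S.recovery h3.1 hInv h3.2
    have hb : ∀ q' : Q, stPhi A aw ρ0 x L k (n+1) (Fin.snoc s q') ≤
        (if StGood A ρ0 x (n+1) q' then 0 else stR Q ^ (k - c - 1)) := by
      intro q'
      by_cases hg : StGood A ρ0 x (n+1) q'
      · rw [if_pos hg]
        have hnl : ¬ stLow A aw x (n+1) q' := by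
          have := S.good_prio (show L ≤ n + 1 by omega) hg
          unfold stLow Layered.semPrio
          omega
        have hcnt : stCnt A aw x L (n+1) (Fin.snoc s q') = c := by
          rw [stCnt_snoc, if_neg (by tauto), add_zero]
        rw [stPhi, hcnt, if_neg h1, if_pos ⟨by omega, by rwa [Fin.snoc_last]⟩]
      · rw [if_neg hg]
        rw [stPhi, stCnt_snoc, ← hc]
        simp only [Fin.snoc_last]
        by_cases hl : L ≤ n + 1 ∧ stLow A aw x (n+1) q'
        · rw [if_pos hl, if_pos hl]
          by_cases hkc : k ≤ c + 1
          · rw [if_pos hkc]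
            have h00 : k - c - 1 = 0 := by omega
            rw [h00, pow_zero]
          · rw [if_neg hkc, if_neg (show ¬ (L ≤ n+1 ∧ StGood A ρ0 x (n+1) q') from by tauto)]
            exact stR_pow_anti (by omega)
        · rw [if_neg hl, if_neg hl, add_zero, if_neg h1,
            if_neg (show ¬ (L ≤ n+1 ∧ StGood A ρ0 x (n+1) q') from by tauto)]
    have hsum : ∑ q' ∈ Finset.univ.filter (fun q' => ¬ StGood A ρ0 x (n+1) q'),
        A.stepProb q (aw n) q' ≤ stR Q := by
      have hsplit := Finset.sum_filter_add_sum_filter_not Finset.univ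
        (fun q' => StGood A ρ0 x (n+1) q') (fun q' => A.stepProb q (aw n) q')
      have htot : ∑ q' : Q, A.stepProb q (aw n) q' = 1 := A.sum_stepProb q (aw n)
      have hg_mem : ρ0 (n+1) ∈ Finset.univ.filter (fun q' => StGood A ρ0 x (n+1) q') := by
        simp [hGg]
      have hge : ((Fintype.card Q : ENNReal))⁻¹ ≤
          ∑ q' ∈ Finset.univ.filter (fun q' => StGood A ρ0 x (n+1) q'),
            A.stepProb q (aw n) q' :=
        le_trans (A.inv_card_le_stepProb hsg)
          (Finset.single_le_sum (fun _ _ => zero_le) hg_mem)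
      apply ENNReal.le_sub_of_add_le_right
        (by have : Nonempty Q := ⟨p⟩; simp [Fintype.card_ne_zero])
      calc (∑ q' ∈ Finset.univ.filter (fun q' => ¬ StGood A ρ0 x (n+1) q'),
            A.stepProb q (aw n) q') + ((Fintype.card Q : ENNReal))⁻¹
          ≤ (∑ q' ∈ Finset.univ.filter (fun q' => ¬ StGood A ρ0 x (n+1) q'),
            A.stepProb q (aw n) q') +
            ∑ q' ∈ Finset.univ.filter (fun q' => StGood A ρ0 x (n+1) q'),
            A.stepProb q (aw n) q' := add_le_add (le_refl _) hge
        _ = 1 := by rw [add_comm, hsplit, htot]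
    calc ∑ q' : Q, A.stepProb q (aw n) q' * stPhi A aw ρ0 x L k (n+1) (Fin.snoc s q')
        ≤ ∑ q' : Q, A.stepProb q (aw n) q' *
            (if StGood A ρ0 x (n+1) q' then 0 else stR Q ^ (k - c - 1)) :=
          Finset.sum_le_sum fun q' _ => mul_le_mul_right (hb q') _
      _ = ∑ q' ∈ Finset.univ.filter (fun q' => ¬ StGood A ρ0 x (n+1) q'),
            A.stepProb q (aw n) q' * stR Q ^ (k - c - 1) := by
          rw [Finset.sum_filter]
          apply Finset.sum_congr rfl
          intro q' _
          by_cases hg : StGood A ρ0 x (n+1) q' <;> simp [hg]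
      _ = (∑ q' ∈ Finset.univ.filter (fun q' => ¬ StGood A ρ0 x (n+1) q'),
            A.stepProb q (aw n) q') * stR Q ^ (k - c - 1) := by rw [Finset.sum_mul]
      _ ≤ stR Q * stR Q ^ (k - c - 1) := mul_le_mul_left hsum _
      _ = stR Q ^ (k - c) := by rw [← pow_succ']; congr 1; omega
  · -- case 4
    rw [stPhi, if_neg h1, if_neg h2, if_neg h3]
    have hb : ∀ q' : Q, stPhi A aw ρ0 x L k (n+1) (Fin.snoc s q') ≤ stR Q ^ (k - c - 1) := by
      intro q'
      rw [stPhi, stCnt_snoc, ← hc]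
      by_cases hl : L ≤ n + 1 ∧ stLow A aw x (n+1) q'
      · rw [if_pos hl]
        split
        · rename_i hkc
          have : k = c + 1 := by omega
          have h00 : k - c - 1 = 0 := by omega
          rw [h00, pow_zero]
        · split
          · exact zero_le
          rw [if_pos (by rwa [Fin.snoc_last])]
          exact stR_pow_anti (by omega)
      · rw [if_neg hl, add_zero, if_neg h1]
        split
        · exact zero_le
        rw [if_neg (by rwa [Fin.snoc_last])]
    calc ∑ q' : Q, A.stepProb q (aw n) q' * stPhi A aw ρ0 x L k (n+1) (Fin.snoc s q')
        ≤ ∑ q' : Q, A.stepProb q (aw n) q' * stR Q ^ (k - c - 1) :=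
          Finset.sum_le_sum fun q' _ => mul_le_mul_right (hb q') _
      _ = (∑ q' : Q, A.stepProb q (aw n) q') * stR Q ^ (k - c - 1) := by
          rw [Finset.sum_mul]
      _ ≤ 1 * stR Q ^ (k - c - 1) := by
          exact mul_le_mul_left (A.sum_stepProb_le_one q (aw n)) _
      _ = stR Q ^ (k - c - 1) := one_mul _

end St4b
end
noncomputable section
section St4c
open Layered

variable {Q α : Type} [Fintype Q] {d : ℕ}

/-- Equivalence between `(Fin (n+1) → Q) × Q` and `Fin (n+2) → Q` by `snoc`. -/
def snocEquiv (Q : Type) (n : ℕ) : ((Fin (n+1) → Q) × Q) ≃ (Fin (n+2) → Q) where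
  toFun sq := Fin.snoc sq.1 sq.2
  invFun t := (Fin.init t, t (Fin.last (n+1)))
  left_inv := by
    rintro ⟨s, q⟩
    simp [Fin.init_snoc, Fin.snoc_last]
  right_inv := by
    intro t
    simp [Fin.snoc_init_self]

lemma sum_snoc {n : ℕ} (f : (Fin (n+2) → Q) → ENNReal) :
    ∑ t : Fin (n+2) → Q, f t = ∑ s : Fin (n+1) → Q, ∑ q' : Q, f (Fin.snoc s q') := by
  have h1 : ∑ sq : (Fin (n+1) → Q) × Q, f (Fin.snoc sq.1 sq.2) = ∑ t : Fin (n+2) → Q, f t :=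
    Fintype.sum_equiv (snocEquiv Q n) _ _ (fun sq => rfl)
  rw [← h1, Fintype.sum_prod_type]

variable {A : Layered Q α d} {aw : ℕ → α} {p : Q} {ρ0 : ℕ → Q} {x L : ℕ}

/-- Expected value of the potential at horizon `n`. -/
def stE (A : Layered Q α d) (aw : ℕ → α) (p : Q) (ρ0 : ℕ → Q) (x L k n : ℕ) : ENNReal :=
  ∑ s : Fin (n+1) → Q, stVal A aw p n s * stPhi A aw ρ0 x L k n s

lemma St4.stE_succ_le (S : St4 A aw p ρ0 x L) (k n : ℕ) (hk : 1 ≤ k) :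
    stE A aw p ρ0 x L k (n+1) ≤ stE A aw p ρ0 x L k n := by
  rw [stE, stE, sum_snoc]
  apply Finset.sum_le_sum
  intro s _
  have hEq : ∀ q' : Q, stVal A aw p (n+1) (Fin.snoc s q') * stPhi A aw ρ0 x L k (n+1) (Fin.snoc s q')
      = stVal A aw p n s * (A.stepProb (s (Fin.last n)) (aw n) q' *
          stPhi A aw ρ0 x L k (n+1) (Fin.snoc s q')) := by
    intro q'
    rw [stVal_snoc]
    ring
  rw [Finset.sum_congr rfl (fun q' _ => hEq q'), ← Finset.mul_sum]
  by_cases hv : stVal A aw p n s = 0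
  · rw [hv, zero_mul, zero_mul]
  · obtain ⟨h0, hstep⟩ := stVal_valid n s hv
    exact mul_le_mul_right (S.key k n hk s h0 hstep) _

lemma stCnt_zero (s : Fin 1 → Q) :
    stCnt A aw x L 0 s = if L ≤ 0 ∧ stLow A aw x 0 (s 0) then 1 else 0 := by
  rw [stCnt]
  by_cases h : L ≤ (0:ℕ) ∧ stLow A aw x 0 (s 0)
  · rw [if_pos h, Finset.filter_true_of_mem, Finset.card_univ]
    · simp
    · intro i _
      have hi : i = 0 := Fin.ext (by have := i.isLt; omega)
      rw [hi]
      exact h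
  · rw [if_neg h, Finset.card_eq_zero, Finset.filter_eq_empty_iff]
    intro i _
    have hi : i = 0 := Fin.ext (by have := i.isLt; omega)
    rw [hi]
    exact h

lemma stPhi_zero_le (k : ℕ) (hk : 1 ≤ k) (s : Fin 1 → Q) :
    stPhi A aw ρ0 x L k 0 s ≤ stR Q ^ (k - 1) := by
  have hlast : (Fin.last 0 : Fin 1) = 0 := rfl
  rw [stPhi, hlast]
  split
  · rename_i hkc
    have hcle : stCnt A aw x L 0 s ≤ 1 := by
      rw [stCnt_zero]
      split <;> omega
    have hk1 : k = 1 := by omega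
    rw [hk1]
    simp
  split
  · exact zero_le
  split
  · rename_i h1 h2 hl
    have hc : stCnt A aw x L 0 s = 1 := by rw [stCnt_zero, if_pos hl]
    rw [hc]
  · rename_i h1 h2 hl
    have hc : stCnt A aw x L 0 s = 0 := by rw [stCnt_zero, if_neg hl]
    rw [hc]
    exact stR_pow_anti (by omega)

lemma stE_zero_le (k : ℕ) (hk : 1 ≤ k) :
    stE A aw p ρ0 x L k 0 ≤ stR Q ^ (k - 1) := by
  rw [stE]
  have hterm : ∀ s : Fin 1 → Q, stVal A aw p 0 s * stPhi A aw ρ0 x L k 0 s ≤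
      (if s 0 = p then stR Q ^ (k - 1) else 0) := by
    intro s
    rw [stVal]
    by_cases h : s 0 = p
    · rw [if_pos h, if_pos h]
      simp only [Finset.univ_eq_empty, Finset.prod_empty, one_mul, mul_one]
      exact stPhi_zero_le k hk s
    · rw [if_neg h, if_neg h, zero_mul, zero_mul]
  calc ∑ s : Fin 1 → Q, stVal A aw p 0 s * stPhi A aw ρ0 x L k 0 s
      ≤ ∑ s : Fin 1 → Q, (if s 0 = p then stR Q ^ (k - 1) else 0) :=
        Finset.sum_le_sum fun s _ => hterm s
    _ = ∑ q : Q, (if q = p then stR Q ^ (k - 1) else 0) := by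
        apply Fintype.sum_equiv (Equiv.funUnique (Fin 1) Q)
        intro s
        rfl
    _ = stR Q ^ (k - 1) := by
        rw [Finset.sum_ite_eq' Finset.univ p (fun _ => stR Q ^ (k - 1))]
        simp

lemma St4.stE_le (S : St4 A aw p ρ0 x L) (k : ℕ) (hk : 1 ≤ k) (n : ℕ) :
    stE A aw p ρ0 x L k n ≤ stR Q ^ (k - 1) := by
  induction n with
  | zero => exact stE_zero_le k hk
  | succ n ih => exact le_trans (S.stE_succ_le k n hk) ih

lemma sum_highcnt_le (k M : ℕ) :
    ∑ t ∈ Finset.univ.filter (fun t : Fin (M+1) → Q => k ≤ stCnt A aw x L M t),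
      stVal A aw p M t ≤ stE A aw p ρ0 x L k M := by
  calc ∑ t ∈ Finset.univ.filter (fun t : Fin (M+1) → Q => k ≤ stCnt A aw x L M t),
        stVal A aw p M t
      = ∑ t ∈ Finset.univ.filter (fun t : Fin (M+1) → Q => k ≤ stCnt A aw x L M t),
        stVal A aw p M t * stPhi A aw ρ0 x L k M t := by
        apply Finset.sum_congr rfl
        intro t ht
        rw [stPhi, if_pos (Finset.mem_filter.mp ht).2, mul_one]
    _ ≤ ∑ t : Fin (M+1) → Q, stVal A aw p M t * stPhi A aw ρ0 x L k M t :=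
        Finset.sum_le_sum_of_subset (Finset.filter_subset _ _)

/-- `t` extends `s`. -/
def stAgr (n M : ℕ) (s : Fin (n+1) → Q) (t : Fin (M+1) → Q) : Prop :=
  ∀ (j : ℕ) (hjn : j < n+1) (hjM : j < M+1), t ⟨j, hjM⟩ = s ⟨j, hjn⟩

/-- Total value of all extensions of a prefix equals the value of the prefix. -/
lemma stVal_ext : ∀ (M n : ℕ), n ≤ M → ∀ (s : Fin (n+1) → Q),
    ∑ t : Fin (M+1) → Q, (if stAgr n M s t then stVal A aw p M t else 0)
      = stVal A aw p n s := by
  have diag : ∀ (N : ℕ) (s : Fin (N+1) → Q),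
      ∑ t : Fin (N+1) → Q, (if stAgr N N s t then stVal A aw p N t else 0)
        = stVal A aw p N s := by
    intro N s
    have hc : ∀ (t : Fin (N+1) → Q), stAgr N N s t = (t = s) := by
      intro t
      apply propext
      constructor
      · intro h
        funext i
        exact h (i : ℕ) i.isLt i.isLt
      · intro h j hjn hjM
        rw [h]
    simp_rw [hc]
    rw [Finset.sum_ite_eq' Finset.univ s (stVal A aw p N)]
    simp
  intro M
  induction M with
  | zero =>
    intro n h s
    interval_cases n
    exact diag 0 s
  | succ M ihM =>
    intro n h s
    by_cases hnM : n = M + 1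
    · subst hnM
      exact diag (M+1) s
    · have hnM' : n ≤ M := by omega
      rw [sum_snoc]
      have hrow : ∀ s' : Fin (M+1) → Q,
          ∑ q' : Q, (if stAgr n (M+1) s (Fin.snoc s' q') then stVal A aw p (M+1) (Fin.snoc s' q')
              else 0)
          = (if stAgr n M s s' then stVal A aw p M s' else 0) := by
        intro s'
        have hcond : ∀ q' : Q, stAgr n (M+1) s (Fin.snoc s' q') ↔ stAgr n M s s' := by
          intro q'
          constructor
          · intro hh j hjn hjM
            have := hh j hjn (by omega)
            rwa [show (⟨j, by omega⟩ : Fin (M+2)) = Fin.castSucc (⟨j, hjM⟩ : Fin (M+1)) from rfl,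
              Fin.snoc_castSucc] at this
          · intro hh j hjn hjM
            rw [show (⟨j, hjM⟩ : Fin (M+2)) =
              Fin.castSucc (⟨j, by omega⟩ : Fin (M+1)) from rfl, Fin.snoc_castSucc]
            exact hh j hjn (by omega)
        by_cases hcd : stAgr n M s s'
        · rw [if_pos hcd]
          calc ∑ q' : Q, (if stAgr n (M+1) s (Fin.snoc s' q')
                then stVal A aw p (M+1) (Fin.snoc s' q') else 0)
              = ∑ q' : Q, stVal A aw p (M+1) (Fin.snoc s' q') := by
                apply Finset.sum_congr rfl
                intro q' _
                rw [if_pos ((hcond q').mpr hcd)]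
            _ = ∑ q' : Q, stVal A aw p M s' * A.stepProb (s' (Fin.last M)) (aw M) q' := by
                apply Finset.sum_congr rfl
                intro q' _
                rw [stVal_snoc]
            _ = stVal A aw p M s' * ∑ q' : Q, A.stepProb (s' (Fin.last M)) (aw M) q' := by
                rw [Finset.mul_sum]
            _ = stVal A aw p M s' := by rw [A.sum_stepProb, mul_one]
        · rw [if_neg hcd]
          apply Finset.sum_eq_zero
          intro q' _
          rw [if_neg (fun hh => hcd ((hcond q').mp hh))]
      rw [Finset.sum_congr rfl (fun s' _ => hrow s')]
      exact ihM n hnM' s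

end St4c
end
noncomputable section
section St4d
open Layered

variable {Q α : Type} [Fintype Q] {d : ℕ}
variable {A : Layered Q α d} {aw : ℕ → α} {p : Q} {ρ0 : ℕ → Q} {x L : ℕ}

/-- Minimal witness of the `k`-th low step at time `n`. -/
def stMW (A : Layered Q α d) (aw : ℕ → α) (x L k n : ℕ) (s : Fin (n+1) → Q) : Prop :=
  stCnt A aw x L n s = k ∧ L ≤ n ∧ stLow A aw x n (s (Fin.last n))

/-- Total value of the minimal witnesses at time `n`. -/
def stW (A : Layered Q α d) (aw : ℕ → α) (p : Q) (x L k n : ℕ) : ENNReal :=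
  ∑ s ∈ Finset.univ.filter (stMW A aw x L k n), stVal A aw p n s

lemma cnt_agr_le {n M : ℕ} (h : n ≤ M) (s : Fin (n+1) → Q) (t : Fin (M+1) → Q)
    (hag : stAgr n M s t) : stCnt A aw x L n s ≤ stCnt A aw x L M t := by
  classical
  rw [stCnt, stCnt]
  have hinj : Function.Injective (fun i : Fin (n+1) => (⟨(i : ℕ), by omega⟩ : Fin (M+1))) := by
    intro i j hij
    simpa [Fin.ext_iff] using hij
  have hsub : (Finset.univ.filter
        (fun i : Fin (n+1) => L ≤ (i:ℕ) ∧ stLow A aw x (i:ℕ) (s i))).image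
        (fun i : Fin (n+1) => (⟨(i : ℕ), by omega⟩ : Fin (M+1))) ⊆
      Finset.univ.filter (fun i : Fin (M+1) => L ≤ (i:ℕ) ∧ stLow A aw x (i:ℕ) (t i)) := by
    intro j hj
    simp only [Finset.mem_image, Finset.mem_filter, Finset.mem_univ, true_and] at hj ⊢
    obtain ⟨i, ⟨hi1, hi2⟩, rfl⟩ := hj
    refine ⟨hi1, ?_⟩
    have hti : t ⟨(i : ℕ), by omega⟩ = s i := by
      have := hag (i : ℕ) i.isLt (by omega)
      rwa [Fin.eta] at this
    rwa [hti]
  calc (Finset.univ.filter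
        (fun i : Fin (n+1) => L ≤ (i:ℕ) ∧ stLow A aw x (i:ℕ) (s i))).card
      = ((Finset.univ.filter
        (fun i : Fin (n+1) => L ≤ (i:ℕ) ∧ stLow A aw x (i:ℕ) (s i))).image
        (fun i : Fin (n+1) => (⟨(i : ℕ), by omega⟩ : Fin (M+1)))).card :=
        (Finset.card_image_of_injective _ hinj).symm
    _ ≤ _ := Finset.card_le_card hsub

lemma cnt_agr_lt {n n' : ℕ} (h : n < n') (s : Fin (n+1) → Q) (s' : Fin (n'+1) → Q)
    (hag : stAgr n n' s s') (hl : L ≤ n') (hlow : stLow A aw x n' (s' (Fin.last n'))) :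
    stCnt A aw x L n s + 1 ≤ stCnt A aw x L n' s' := by
  classical
  rw [stCnt, stCnt]
  set img := (Finset.univ.filter
      (fun i : Fin (n+1) => L ≤ (i:ℕ) ∧ stLow A aw x (i:ℕ) (s i))).image
      (fun i : Fin (n+1) => (⟨(i : ℕ), by omega⟩ : Fin (n'+1))) with himg
  have hinj : Function.Injective (fun i : Fin (n+1) => (⟨(i : ℕ), by omega⟩ : Fin (n'+1))) := by
    intro i j hij
    simpa [Fin.ext_iff] using hij
  have hcard : img.card = (Finset.univ.filter
      (fun i : Fin (n+1) => L ≤ (i:ℕ) ∧ stLow A aw x (i:ℕ) (s i))).card :=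
    Finset.card_image_of_injective _ hinj
  have hnotmem : Fin.last n' ∉ img := by
    rw [himg]
    intro hmem
    obtain ⟨i, _, hi⟩ := Finset.mem_image.mp hmem
    have := congrArg Fin.val hi
    simp only [Fin.val_last] at this
    have := i.isLt
    omega
  have hsub : insert (Fin.last n') img ⊆
      Finset.univ.filter (fun i : Fin (n'+1) => L ≤ (i:ℕ) ∧ stLow A aw x (i:ℕ) (s' i)) := by
    intro j hj
    rcases Finset.mem_insert.mp hj with hj | hj
    · subst hj
      simp only [Finset.mem_filter, Finset.mem_univ, true_and, Fin.val_last]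
      exact ⟨hl, hlow⟩
    · rw [himg] at hj
      obtain ⟨i, hi, rfl⟩ := Finset.mem_image.mp hj
      simp only [Finset.mem_filter, Finset.mem_univ, true_and] at hi ⊢
      obtain ⟨hi1, hi2⟩ := hi
      refine ⟨hi1, ?_⟩
      have hti : s' ⟨(i : ℕ), by omega⟩ = s i := by
        have := hag (i : ℕ) i.isLt (by omega)
        rwa [Fin.eta] at this
      rwa [hti]
  calc (Finset.univ.filter
        (fun i : Fin (n+1) => L ≤ (i:ℕ) ∧ stLow A aw x (i:ℕ) (s i))).card + 1
      = (insert (Fin.last n') img).card := by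
        rw [Finset.card_insert_of_notMem hnotmem, hcard]
    _ ≤ _ := Finset.card_le_card hsub

/-- Derived agreement between two prefixes extending to the same `t`. -/
lemma agr_of_agr {n n' M : ℕ} (hn : n ≤ M) (hn' : n' ≤ M) (hnn : n ≤ n')
    (s : Fin (n+1) → Q) (s' : Fin (n'+1) → Q) (t : Fin (M+1) → Q)
    (hag : stAgr n M s t) (hag' : stAgr n' M s' t) : stAgr n n' s s' := by
  intro j hjn hjn'
  rw [← hag' j hjn' (by omega : j < M + 1)]
  exact hag j hjn _

lemma MW_unique_n {n n' M : ℕ} (hn : n ≤ M) (hn' : n' ≤ M) {k : ℕ}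
    {s : Fin (n+1) → Q} {s' : Fin (n'+1) → Q} {t : Fin (M+1) → Q}
    (hW : stMW A aw x L k n s) (hW' : stMW A aw x L k n' s')
    (hag : stAgr n M s t) (hag' : stAgr n' M s' t) : n = n' := by
  by_contra hne
  rcases Nat.lt_or_ge n n' with hlt | hge
  · have := cnt_agr_lt (A := A) (aw := aw) (x := x) (L := L) hlt s s'
      (agr_of_agr hn hn' (by omega) s s' t hag hag') hW'.2.1 hW'.2.2
    rw [hW.1, hW'.1] at this
    omega
  · have hlt : n' < n := by omega
    have := cnt_agr_lt (A := A) (aw := aw) (x := x) (L := L) hlt s' s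
      (agr_of_agr hn' hn (by omega) s' s t hag' hag) hW.2.1 hW.2.2
    rw [hW.1, hW'.1] at this
    omega

lemma agr_unique_s {n M : ℕ} (hn : n ≤ M) {s s' : Fin (n+1) → Q} {t : Fin (M+1) → Q}
    (hag : stAgr n M s t) (hag' : stAgr n M s' t) : s = s' := by
  funext i
  have hiM : (i : ℕ) < M + 1 := by have := i.isLt; omega
  have e1 := hag (i : ℕ) i.isLt hiM
  have e2 := hag' (i : ℕ) i.isLt hiM
  rw [Fin.eta] at e1 e2
  rw [← e1, ← e2]

/-- The per-`t` bound: at most one minimal witness is a prefix of `t`. -/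
lemma per_t (k M : ℕ) (t : Fin (M+1) → Q) :
    ∑ n ∈ Finset.range (M+1), ∑ s ∈ Finset.univ.filter (stMW A aw x L k n),
      (if stAgr n M s t then stVal A aw p M t else 0)
      ≤ (if k ≤ stCnt A aw x L M t then stVal A aw p M t else 0) := by
  classical
  by_cases hex : ∃ n ∈ Finset.range (M+1),
      ∃ s ∈ Finset.univ.filter (stMW A aw x L k n), stAgr n M s t
  · obtain ⟨n0, hn0, s0, hs0, hag0⟩ := hex
    have hW0 : stMW A aw x L k n0 s0 := (Finset.mem_filter.mp hs0).2
    have hn0M : n0 ≤ M := by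
      have := Finset.mem_range.mp hn0
      omega
    have hkc : k ≤ stCnt A aw x L M t := by
      rw [← hW0.1]
      exact cnt_agr_le hn0M s0 t hag0
    rw [if_pos hkc]
    have houter : ∀ n ∈ Finset.range (M+1), n ≠ n0 →
        ∑ s ∈ Finset.univ.filter (stMW A aw x L k n),
          (if stAgr n M s t then stVal A aw p M t else 0) = 0 := by
      intro n hn hne
      apply Finset.sum_eq_zero
      intro s hs
      rw [if_neg]
      intro hag
      exact hne (MW_unique_n (by have := Finset.mem_range.mp hn; omega) hn0M
        (Finset.mem_filter.mp hs).2 hW0 hag hag0)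
    rw [Finset.sum_eq_single_of_mem n0 hn0 houter]
    have hinner : ∀ s ∈ Finset.univ.filter (stMW A aw x L k n0), s ≠ s0 →
        (if stAgr n0 M s t then stVal A aw p M t else 0) = 0 := by
      intro s _ hne
      rw [if_neg]
      intro hag
      exact hne (agr_unique_s hn0M hag hag0)
    rw [Finset.sum_eq_single_of_mem s0 hs0 hinner, if_pos hag0]
  · push_neg at hex
    have hz : ∀ n ∈ Finset.range (M+1),
        ∑ s ∈ Finset.univ.filter (stMW A aw x L k n),
          (if stAgr n M s t then stVal A aw p M t else 0) = 0 := by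
      intro n hn
      apply Finset.sum_eq_zero
      intro s hs
      rw [if_neg (hex n hn s hs)]
    rw [Finset.sum_congr rfl hz]
    simp

/-- Partial sums of minimal-witness weights are bounded by `r^(k-1)`. -/
lemma St4.sum_stW_le (S : St4 A aw p ρ0 x L) (k : ℕ) (hk : 1 ≤ k) (M : ℕ) :
    ∑ n ∈ Finset.range (M+1), stW A aw p x L k n ≤ stR Q ^ (k - 1) := by
  classical
  have key : ∑ n ∈ Finset.range (M+1), stW A aw p x L k n ≤
      ∑ t ∈ Finset.univ.filter (fun t : Fin (M+1) → Q => k ≤ stCnt A aw x L M t),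
        stVal A aw p M t := by
    calc ∑ n ∈ Finset.range (M+1), stW A aw p x L k n
        = ∑ n ∈ Finset.range (M+1), ∑ s ∈ Finset.univ.filter (stMW A aw x L k n),
            ∑ t : Fin (M+1) → Q, (if stAgr n M s t then stVal A aw p M t else 0) := by
          apply Finset.sum_congr rfl
          intro n hn
          apply Finset.sum_congr rfl
          intro s _
          exact (stVal_ext M n (by have := Finset.mem_range.mp hn; omega) s).symm
      _ = ∑ n ∈ Finset.range (M+1), ∑ t : Fin (M+1) → Q,
            ∑ s ∈ Finset.univ.filter (stMW A aw x L k n),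
            (if stAgr n M s t then stVal A aw p M t else 0) :=
          Finset.sum_congr rfl fun n _ => Finset.sum_comm
      _ = ∑ t : Fin (M+1) → Q, ∑ n ∈ Finset.range (M+1),
            ∑ s ∈ Finset.univ.filter (stMW A aw x L k n),
            (if stAgr n M s t then stVal A aw p M t else 0) := Finset.sum_comm
      _ ≤ ∑ t : Fin (M+1) → Q, (if k ≤ stCnt A aw x L M t then stVal A aw p M t else 0) :=
          Finset.sum_le_sum fun t _ => per_t k M t
      _ = ∑ t ∈ Finset.univ.filter (fun t : Fin (M+1) → Q => k ≤ stCnt A aw x L M t),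
            stVal A aw p M t := (Finset.sum_filter _ _).symm
  exact le_trans key (le_trans (sum_highcnt_le k M) (S.stE_le k hk M))

end St4d
end
noncomputable section
section St4e
open Layered MeasureTheory

variable {Q α : Type} [Fintype Q] {d : ℕ}
variable {A : Layered Q α d} {aw : ℕ → α} {p : Q} {ρ0 : ℕ → Q} {x L : ℕ}

/-- The length-`n+1` prefix of an infinite path. -/
def stPre (ρ : ℕ → Q) (n : ℕ) : Fin (n+1) → Q := fun i => ρ (i : ℕ)

lemma stPre_snoc (ρ : ℕ → Q) (n : ℕ) :
    stPre ρ (n+1) = Fin.snoc (stPre ρ n) (ρ (n+1)) := by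
  funext i
  refine Fin.lastCases ?_ ?_ i
  · rw [Fin.snoc_last]
    rfl
  · intro j
    rw [Fin.snoc_castSucc]
    rfl

lemma stCnt_pre_mono (ρ : ℕ → Q) : Monotone (fun n => stCnt A aw x L n (stPre ρ n)) := by
  apply monotone_nat_of_le_succ
  intro n
  rw [stPre_snoc, stCnt_snoc]
  split <;> omega

lemma exists_MW_prefix (ρ : ℕ → Q)
    (hlow : ∀ N, ∃ n, N ≤ n ∧ stLow A aw x n (ρ n)) (k : ℕ) (hk : 1 ≤ k) :
    ∃ n, stMW A aw x L k n (stPre ρ n) := by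
  -- the count reaches every value
  have hreach : ∀ j : ℕ, ∃ n, j ≤ stCnt A aw x L n (stPre ρ n) := by
    intro j
    induction j with
    | zero => exact ⟨0, by omega⟩
    | succ j ih =>
      obtain ⟨n, hn⟩ := ih
      obtain ⟨n', hn', hlow'⟩ := hlow (max (n+1) (L+1))
      have hn'1 : n + 1 ≤ n' := le_trans (le_max_left _ _) hn'
      have hn'L : L ≤ n' := by have := le_trans (le_max_right _ _) hn'; omega
      obtain ⟨m, rfl⟩ : ∃ m, n' = m + 1 := ⟨n' - 1, by omega⟩
      have hstep : stCnt A aw x L (m+1) (stPre ρ (m+1)) =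
          stCnt A aw x L m (stPre ρ m) + 1 := by
        rw [stPre_snoc, stCnt_snoc, if_pos ⟨hn'L, hlow'⟩]
      have hmono := stCnt_pre_mono (A := A) (aw := aw) (x := x) (L := L) ρ
        (show n ≤ m by omega)
      exact ⟨m + 1, by simp only at hmono; omega⟩
  have hne : ∃ n, k ≤ stCnt A aw x L n (stPre ρ n) := hreach k
  classical
  obtain ⟨n0, hfind, hmin⟩ : ∃ n0, k ≤ stCnt A aw x L n0 (stPre ρ n0) ∧
      ∀ m, m < n0 → ¬ k ≤ stCnt A aw x L m (stPre ρ m) :=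
    ⟨Nat.find hne, Nat.find_spec hne, fun m hm => Nat.find_min hne hm⟩
  cases n0 with
  | zero =>
    have hc0 := stCnt_zero (A := A) (aw := aw) (x := x) (L := L) (stPre ρ 0)
    by_cases h : L ≤ 0 ∧ stLow A aw x 0 (stPre ρ 0 0)
    · refine ⟨0, ?_, h.1, ?_⟩
      · rw [hc0, if_pos h]
        rw [hc0, if_pos h] at hfind
        omega
      · exact h.2
    · rw [hc0, if_neg h] at hfind
      omega
  | succ m =>
    have hprev : ¬ k ≤ stCnt A aw x L m (stPre ρ m) := hmin m (by omega)
    rw [stPre_snoc, stCnt_snoc] at hfind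
    by_cases h : L ≤ m + 1 ∧ stLow A aw x (m+1) (ρ (m+1))
    · rw [if_pos h] at hfind
      refine ⟨m + 1, ?_, h.1, ?_⟩
      · rw [stPre_snoc, stCnt_snoc, if_pos h]
        omega
      · have hlast : (stPre ρ (m+1)) (Fin.last (m+1)) = ρ (m+1) := rfl
        rw [hlast]
        exact h.2
    · rw [if_neg h] at hfind
      omega

/-- Main measure bound: the set of paths with infinitely many low steps is null. -/
lemma St4.bad_zero [MeasurableSpace Q] (S : St4 A aw p ρ0 x L)
    (m : MeasureTheory.Measure (ℕ → Q))
    (hcyl : ∀ (n : ℕ) (s : Fin (n+1) → Q),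
      m {ρ : ℕ → Q | ∀ i : Fin (n+1), ρ (i : ℕ) = s i} = stVal A aw p n s) :
    m {ρ : ℕ → Q | ∀ N, ∃ n, N ≤ n ∧ stLow A aw x n (ρ n)} = 0 := by
  classical
  have hNQ : Nonempty Q := ⟨p⟩
  -- measure of the "wrong start" set is 0
  have hstart : m {ρ : ℕ → Q | ρ 0 ≠ p} = 0 := by
    have hsub : {ρ : ℕ → Q | ρ 0 ≠ p} ⊆
        ⋃ q : {q : Q // q ≠ p}, {ρ : ℕ → Q | ∀ i : Fin 1, ρ (i : ℕ) = (q : Q)} := by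
      intro ρ hρ
      refine Set.mem_iUnion.mpr ⟨⟨ρ 0, hρ⟩, ?_⟩
      intro i
      have hi : (i : ℕ) = 0 := by have := i.isLt; omega
      rw [hi]
    refine le_antisymm (le_trans (measure_mono hsub) ?_) (zero_le)
    refine le_trans (measure_iUnion_le _) ?_
    have hz : ∀ q : {q : Q // q ≠ p},
        m {ρ : ℕ → Q | ∀ i : Fin 1, ρ (i : ℕ) = (q : Q)} = 0 := by
      intro q
      have := hcyl 0 (fun _ => (q : Q))
      rw [this, stVal, if_neg q.2, zero_mul]
    refine le_of_eq ?_
    calc ∑' q : {q : Q // q ≠ p}, m {ρ : ℕ → Q | ∀ i : Fin 1, ρ (i : ℕ) = (q : Q)}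
        = ∑' q : {q : Q // q ≠ p}, 0 := tsum_congr hz
      _ = 0 := tsum_zero
  -- for each k the bad set is covered by the witnesses
  have hcover : ∀ k : ℕ, 1 ≤ k →
      {ρ : ℕ → Q | ∀ N, ∃ n, N ≤ n ∧ stLow A aw x n (ρ n)} ⊆
        {ρ : ℕ → Q | ρ 0 ≠ p} ∪
        ⋃ n : ℕ, ⋃ s ∈ Finset.univ.filter (stMW A aw x L k n),
          {ρ : ℕ → Q | ∀ i : Fin (n+1), ρ (i : ℕ) = s i} := by
    intro k hk ρ hρ
    by_cases h0 : ρ 0 = p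
    · right
      obtain ⟨n, hMW⟩ := exists_MW_prefix (A := A) (aw := aw) (x := x) (L := L) ρ hρ k hk
      refine Set.mem_iUnion.mpr ⟨n, Set.mem_iUnion.mpr ⟨stPre ρ n, ?_⟩⟩
      refine Set.mem_iUnion.mpr ⟨by simpa using hMW, ?_⟩
      intro i
      rfl
    · left
      exact h0
  have hbound : ∀ k : ℕ, 1 ≤ k →
      m {ρ : ℕ → Q | ∀ N, ∃ n, N ≤ n ∧ stLow A aw x n (ρ n)} ≤ stR Q ^ (k - 1) := by
    intro k hk
    refine le_trans (measure_mono (hcover k hk)) ?_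
    refine le_trans (measure_union_le _ _) ?_
    rw [hstart, zero_add]
    refine le_trans (measure_iUnion_le _) ?_
    have hrow : ∀ n : ℕ,
        m (⋃ s ∈ Finset.univ.filter (stMW A aw x L k n),
          {ρ : ℕ → Q | ∀ i : Fin (n+1), ρ (i : ℕ) = s i}) ≤ stW A aw p x L k n := by
      intro n
      refine le_trans (measure_biUnion_finset_le _ _) ?_
      rw [stW]
      apply Finset.sum_le_sum
      intro s _
      rw [hcyl n s]
    refine le_trans (ENNReal.tsum_le_tsum hrow) ?_
    rw [ENNReal.tsum_eq_iSup_sum]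
    apply iSup_le
    intro F
    obtain ⟨M, hM⟩ := F.exists_nat_subset_range
    calc ∑ n ∈ F, stW A aw p x L k n
        ≤ ∑ n ∈ Finset.range (M+1), stW A aw p x L k n :=
          Finset.sum_le_sum_of_subset (le_trans hM (Finset.range_subset_range.mpr (by omega)))
      _ ≤ stR Q ^ (k - 1) := S.sum_stW_le k hk M
  -- let k → ∞
  have hr : stR Q < 1 := by
    apply ENNReal.sub_lt_self
    · exact ENNReal.one_ne_top
    · exact one_ne_zero
    · exact ENNReal.inv_ne_zero.mpr (ENNReal.natCast_ne_top _)
  have htend := ENNReal.tendsto_pow_atTop_nhds_zero_of_lt_one hr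
  refine le_antisymm ?_ (zero_le)
  refine ge_of_tendsto htend ?_
  refine Filter.Eventually.of_forall ?_
  intro j
  have := hbound (j+1) (by omega)
  simpa using this

end St4e
end
/-- If the word `u·w` admits a run of `⟦A⟧` from the leaf state `p`
with priorities `≥ x` along `u` and `≥ x+1` afterwards, then the random walk of `⟦A⟧`
over `u·w` from `p` almost surely eventually uses only transitions of priority `≥ x+1`. -/
theorem statement_4 {Q α : Type} [Fintype Q] [Fintype α] [Nonempty α] [MeasurableSpace Q]
    {d : ℕ} (hd : 1 ≤ d)
    (A : Layered Q α d) (p : Q) (hp : A.IsLeaf p)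
    (x : ℕ) (hx1 : 1 ≤ x) (hxd : x ≤ d)
    (u : List α) (w : ℕ → α) (ρ0 : ℕ → Q)
    (hrun : A.IsSemRun (prependW u w) p ρ0)
    (hu : ∀ i : ℕ, i < u.length → x ≤ A.semPrio (ρ0 i) (prependW u w i))
    (hw : ∀ i : ℕ, u.length ≤ i → x + 1 ≤ A.semPrio (ρ0 i) (prependW u w i))
    (m : MeasureTheory.Measure (ℕ → Q)) (hm : A.IsWalkMeasure (prependW u w) p m) :
    m {ρ : ℕ → Q | ∃ N : ℕ, ∀ n : ℕ, N ≤ n →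
        x + 1 ≤ A.semPrio (ρ n) (prependW u w n)} = 1 := by
  classical
  set aw := prependW u w with haw
  set L := u.length with hL
  have hNQ : Nonempty Q := ⟨p⟩
  have S : St4 A aw p ρ0 x L := by
    refine ⟨hx1, hrun.1, hrun.2, ?_, hw⟩
    intro n
    by_cases hn : n < L
    · exact hu n hn
    · exact le_trans (Nat.le_succ x) (hw n (by omega))
  have hcyl : ∀ (n : ℕ) (s : Fin (n+1) → Q),
      m {ρ : ℕ → Q | ∀ i : Fin (n+1), ρ (i : ℕ) = s i} = stVal A aw p n s := by
    intro n s
    rw [hm.2 n s]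
    rfl
  have hbad := S.bad_zero m hcyl
  haveI : MeasureTheory.IsProbabilityMeasure m := hm.1
  set T := {ρ : ℕ → Q | ∃ N : ℕ, ∀ n : ℕ, N ≤ n →
    x + 1 ≤ A.semPrio (ρ n) (aw n)} with hT
  have hsub : Tᶜ ⊆ {ρ : ℕ → Q | ∀ N, ∃ n, N ≤ n ∧ stLow A aw x n (ρ n)} := by
    intro ρ hρ
    simp only [hT, Set.mem_compl_iff, Set.mem_setOf_eq, not_exists, not_forall] at hρ
    intro N
    obtain ⟨n, hn, hlt⟩ := hρ N
    refine ⟨n, hn, ?_⟩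
    unfold stLow
    omega
  have hcompl : m Tᶜ = 0 :=
    le_antisymm (le_trans (MeasureTheory.measure_mono hsub) (le_of_eq hbad)) (zero_le)
  apply le_antisymm
  · exact MeasureTheory.prob_le_one
  · calc (1 : ENNReal) = m Set.univ := (MeasureTheory.measure_univ).symm
      _ = m (T ∪ Tᶜ) := by rw [Set.union_compl_self]
      _ ≤ m T + m Tᶜ := MeasureTheory.measure_union_le _ _
      _ = m T := by rw [hcompl, add_zero]
end

section
/- Let A be a layered automaton over a finite alphabet Σ, let x be an odd priority, p a leaf state, and suppose the infinite word w = u·w̃ admits a run in ⟦A⟧ of the form p →u q →w̃, where every transition along u has priority ≥ x and every transition along the infinite run over w̃ has priority ≥ x+1. Then for every u₀ ∈ Σ*, every longest suffix resolver for Eve initialised to u₀ ensures that on every run over w from p consistent with it, eventually all transitions have priority ≥ x+1. -/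
open scoped Classical

section Aux
open Layered
variable {Q α : Type} {d : ℕ} (A : Layered Q α d)

private lemma aux_layer_iter (x : ℕ) (hx1 : 1 ≤ x) :
    ∀ (k : ℕ) (q : Q), A.layer q = x + k → A.layer ((A.μ)^[k] q) = x := by
  intro k
  induction k with
  | zero => intro q h; simpa using h
  | succ k ih =>
    intro q h
    have h1 : 1 < A.layer q := by omega
    have h2 := A.μ_layer q h1
    rw [Function.iterate_succ_apply]
    exact ih (A.μ q) (by omega)

lemma aux_layer_muHat {x : ℕ} (hx1 : 1 ≤ x) {q : Q} (hx : x ≤ A.layer q) :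
    A.layer (A.muHat x q) = x :=
  aux_layer_iter A x hx1 _ q (by omega)

lemma aux_muHat_self {x : ℕ} {q : Q} (h : A.layer q ≤ x) : A.muHat x q = q := by
  unfold Layered.muHat
  rw [Nat.sub_eq_zero_of_le h, Function.iterate_zero_apply]

lemma aux_mu_muHat {x : ℕ} {q : Q} (h : x + 1 ≤ A.layer q) :
    A.μ (A.muHat (x + 1) q) = A.muHat x q := by
  unfold Layered.muHat
  rw [show A.layer q - x = (A.layer q - (x + 1)) + 1 by omega, Function.iterate_succ_apply']

lemma aux_layerOf_le (q : Q) (a : α) : A.layerOf q a ≤ A.layer q :=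
  Nat.findGreatest_le _

lemma aux_layerOf_pos (q : Q) (a : α) : 1 ≤ A.layerOf q a :=
  Nat.le_findGreatest (A.layer_pos q)
    (A.complete1 _ a (aux_layer_muHat A le_rfl (A.layer_pos q)))

lemma aux_le_layerOf {q : Q} {a : α} {y : ℕ} (hy : y ≤ A.layer q)
    (h : (A.δ (A.muHat y q) a).isSome = true) : y ≤ A.layerOf q a :=
  Nat.le_findGreatest hy h

lemma aux_layerOf_none {q : Q} {a : α} {y : ℕ} (h1 : A.layerOf q a < y)
    (h2 : y ≤ A.layer q) : A.δ (A.muHat y q) a = none := by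
  have h := Nat.findGreatest_is_greatest (P := fun z => (A.δ (A.muHat z q) a).isSome = true) h1 h2
  simpa [Option.not_isSome_iff_eq_none] using h

lemma aux_semStep_layer {q q' : Q} {a : α} (h : A.semStep q a q') :
    A.layerOf q a ≤ A.layer q' := by
  by_contra hlt
  push_neg at hlt
  have hlay := A.δ_layer _ _ _ h.2
  rw [aux_muHat_self A hlt.le,
    aux_layer_muHat A (aux_layerOf_pos A q a) (aux_layerOf_le A q a)] at hlay
  omega

lemma aux_proj (a : α) (y : ℕ) (hy1 : 1 ≤ y) :
    ∀ (n : ℕ) (q q' : Q), y + n ≤ A.layer q → y + n ≤ A.layer q' →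
      A.δ (A.muHat (y + n) q) a = some (A.muHat (y + n) q') →
      A.δ (A.muHat y q) a = some (A.muHat y q') := by
  intro n
  induction n with
  | zero => intro q q' _ _ h; simpa using h
  | succ n ih =>
    intro q q' hq hq' h
    have h1 : 1 < A.layer (A.muHat (y + (n + 1)) q) := by
      rw [aux_layer_muHat A (by omega) hq]; omega
    have h2 := A.μ_morph _ a _ h1 h
    rw [show y + (n + 1) = (y + n) + 1 from rfl] at h2
    rw [aux_mu_muHat A (show y + n + 1 ≤ A.layer q by omega),
      aux_mu_muHat A (show y + n + 1 ≤ A.layer q' by omega)] at h2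
    exact ih q q' (by omega) (by omega) h2

lemma aux_semStep_proj {q q' : Q} {a : α} (h : A.semStep q a q') {y : ℕ}
    (hy1 : 1 ≤ y) (hy : y ≤ A.layerOf q a) :
    A.δ (A.muHat y q) a = some (A.muHat y q') := by
  have h1 := aux_layerOf_le A q a
  have h2 := aux_semStep_layer A h
  have h3 := h.2
  rw [show A.layerOf q a = y + (A.layerOf q a - y) by omega] at h3
  exact aux_proj A a y hy1 _ q q' (by omega) (by omega) h3

lemma aux_runList_append (q : Q) (l l' : List α) :
    A.runList q (l ++ l') = (A.runList q l).bind fun r => A.runList r l' := by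
  induction l generalizing q with
  | nil => rfl
  | cons a l ih =>
    simp only [List.cons_append, Layered.runList]
    cases hd : A.δ q a <;> simp [hd, ih]

lemma aux_leaf_above (q : Q) :
    ∃ l, A.IsLeaf l ∧ A.layer q ≤ A.layer l ∧ A.muHat (A.layer q) l = q := by
  suffices h : ∀ (n : ℕ) (q : Q), d - A.layer q ≤ n →
      ∃ l, A.IsLeaf l ∧ A.layer q ≤ A.layer l ∧ A.muHat (A.layer q) l = q from
    h (d - A.layer q) q le_rfl
  intro n
  induction n with
  | zero =>
    intro q hq
    by_cases hl : A.IsLeaf q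
    · exact ⟨q, hl, le_rfl, aux_muHat_self A le_rfl⟩
    · exfalso
      simp only [Layered.IsLeaf] at hl
      push_neg at hl
      obtain ⟨p, hp1, hp2⟩ := hl
      have e := A.μ_layer p hp1
      rw [hp2] at e
      have := A.layer_le p
      omega
  | succ n ih =>
    intro q hq
    by_cases hl : A.IsLeaf q
    · exact ⟨q, hl, le_rfl, aux_muHat_self A le_rfl⟩
    · simp only [Layered.IsLeaf] at hl
      push_neg at hl
      obtain ⟨p, hp1, hp2⟩ := hl
      have e := A.μ_layer p hp1
      rw [hp2] at e
      have hd' := A.layer_le p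
      obtain ⟨l, hl1, hl2, hl3⟩ := ih p (by omega)
      refine ⟨l, hl1, by omega, ?_⟩
      have h2 : A.muHat (A.layer q) l = A.μ (A.muHat (A.layer q + 1) l) :=
        (aux_mu_muHat A (by omega)).symm
      rw [h2, e, hl3, hp2]

lemma aux_lsl_ge {u : List α} {r : Q} {k : ℕ} (h1 : k ≤ u.length)
    (h2 : A.suffixReaches r (u.drop (u.length - k))) :
    k ≤ A.longestSuffixLen u r :=
  Nat.le_findGreatest h1 ⟨h1, h2⟩

lemma aux_lsl_spec (u : List α) (r : Q) :
    A.longestSuffixLen u r ≤ u.length ∧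
      A.suffixReaches r (u.drop (u.length - A.longestSuffixLen u r)) := by
  have h0 : (fun k => k ≤ u.length ∧ A.suffixReaches r (u.drop (u.length - k))) 0 :=
    ⟨Nat.zero_le _, by rw [Nat.sub_zero, List.drop_length]; exact ⟨r, rfl, rfl⟩⟩
  exact Nat.findGreatest_spec (P := fun k => k ≤ u.length ∧
    A.suffixReaches r (u.drop (u.length - k))) (Nat.zero_le _) h0

lemma aux_wordPrefix_succ {β : Type} (w : ℕ → β) (n : ℕ) :
    wordPrefix w (n + 1) = wordPrefix w n ++ [w n] := by
  rw [wordPrefix, wordPrefix, List.ofFn_succ']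
  simp [List.concat_eq_append]

end Aux
/-- Let `x` be odd and suppose `w = u·w̃` admits a run of `⟦A⟧` from the
leaf state `p` with priorities `≥ x` along `u` and `≥ x+1` afterwards.  Then for every
`u₀`, every longest suffix resolver for Eve initialised to `u₀` ensures that on every
consistent run over `w` from `p`, eventually all transitions have priority `≥ x+1`. -/
theorem statement_5 {Q α : Type} [Fintype Q] [Fintype α] [Nonempty α] {d : ℕ} (hd : 1 ≤ d)
    (A : Layered Q α d) (p : Q) (hp : A.IsLeaf p)
    (x : ℕ) (hx1 : 1 ≤ x) (hxd : x ≤ d) (hodd : Odd x)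
    (u : List α) (wt : ℕ → α) (ρ0 : ℕ → Q)
    (hrun : A.IsSemRun (prependW u wt) p ρ0)
    (hu : ∀ i : ℕ, i < u.length → x ≤ A.semPrio (ρ0 i) (prependW u wt i))
    (hw : ∀ i : ℕ, u.length ≤ i → x + 1 ≤ A.semPrio (ρ0 i) (prependW u wt i))
    (u0 : List α) (σ : List (Q × α) → Q → α → Q)
    (hσ : A.IsLongestSuffixResolverE u0 σ) :
    ∀ ρ : ℕ → Q, A.IsSemRun (prependW u wt) p ρ → A.ConsEve σ (prependW u wt) ρ →
      ∃ N : ℕ, ∀ n : ℕ, N ≤ n → x + 1 ≤ A.semPrio (ρ n) (prependW u wt n) := by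
  intro ρ hρ hcons
  set w : ℕ → α := prependW u wt with hwdef
  set m0 : ℕ := u.length with hm0
  have hsem : ∀ q a, A.semPrio q a = A.layerOf q a := fun _ _ => rfl
  simp only [hsem] at hu hw
  -- combined priority bounds for ρ0
  have hxall : ∀ i, x ≤ A.layerOf (ρ0 i) (w i) := by
    intro i
    by_cases h : i < m0
    · exact hu i h
    · have := hw i (by omega)
      omega
  have hx1all : ∀ i, m0 ≤ i → x + 1 ≤ A.layerOf (ρ0 i) (w i) := hw
  have hlayρ0 : ∀ i, x ≤ A.layer (ρ0 i) :=
    fun i => le_trans (hxall i) (aux_layerOf_le A _ _)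
  have hlayρ0' : ∀ i, m0 ≤ i → x + 1 ≤ A.layer (ρ0 i) :=
    fun i hi => le_trans (hx1all i hi) (aux_layerOf_le A _ _)
  -- projections of the reference run
  have hδx0 : ∀ i, A.δ (A.muHat x (ρ0 i)) (w i) = some (A.muHat x (ρ0 (i + 1))) :=
    fun i => aux_semStep_proj A (hrun.2 i) hx1 (hxall i)
  have hδx10 : ∀ i, m0 ≤ i →
      A.δ (A.muHat (x + 1) (ρ0 i)) (w i) = some (A.muHat (x + 1) (ρ0 (i + 1))) :=
    fun i hi => aux_semStep_proj A (hrun.2 i) (by omega) (hx1all i hi)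
  -- invariant: ρ agrees with ρ0 up to layer x
  have hinv : ∀ n, x ≤ A.layer (ρ n) ∧ A.muHat x (ρ n) = A.muHat x (ρ0 n) := by
    intro n
    induction n with
    | zero =>
      rw [hρ.1, hrun.1]
      exact ⟨by rw [← hrun.1]; exact hlayρ0 0, rfl⟩
    | succ n ih =>
      have hpr : x ≤ A.layerOf (ρ n) (w n) := by
        apply aux_le_layerOf A ih.1
        rw [ih.2, hδx0 n]
        rfl
      have hlay' := aux_semStep_layer A (hρ.2 n)
      refine ⟨le_trans hpr hlay', ?_⟩
      have hproj := aux_semStep_proj A (hρ.2 n) hx1 hpr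
      rw [ih.2, hδx0 n] at hproj
      exact (Option.some.inj hproj).symm
  have hprge : ∀ n, x ≤ A.layerOf (ρ n) (w n) := by
    intro n
    apply aux_le_layerOf A (hinv n).1
    rw [(hinv n).2, hδx0 n]
    rfl
  -- the word sequence
  set Wl : ℕ → List α := fun n => u0 ++ wordPrefix w n with hWl
  have hWlen : ∀ n, (Wl n).length = u0.length + n := by
    intro n; simp [hWl, wordPrefix]
  have hWsucc : ∀ n, Wl (n + 1) = Wl n ++ [w n] := by
    intro n
    simp only [hWl, aux_wordPrefix_succ, List.append_assoc]
  have hdrop : ∀ (s n : ℕ), s ≤ u0.length + n →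
      (Wl (n + 1)).drop s = (Wl n).drop s ++ [w n] := by
    intro s n hs
    rw [hWsucc n, List.drop_append_of_le_length (by rw [hWlen]; exact hs)]
  have hsnoc : ∀ (q r r' : Q) (v : List α) (a : α), A.runList q v = some r →
      A.δ r a = some r' → A.runList q (v ++ [a]) = some r' := by
    intro q r r' v a h1 h2
    rw [aux_runList_append, h1]
    simp [Layered.runList, h2]
  have hsnoc_none : ∀ (q r : Q) (v : List α) (a : α), A.runList q v = some r →
      A.δ r a = none → A.runList q (v ++ [a]) = none := by
    intro q r v a h1 h2
    rw [aux_runList_append, h1]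
    simp [Layered.runList, h2]
  have happ_none : ∀ (q : Q) (v v' : List α), A.runList q v = none →
      A.runList q (v ++ v') = none := by
    intro q v v' h1
    rw [aux_runList_append, h1]
    rfl
  -- the reference thread in layer x+1
  have hthread0 : ∀ k, A.runList (A.muHat (x + 1) (ρ0 m0))
      ((Wl (m0 + k)).drop (u0.length + m0)) = some (A.muHat (x + 1) (ρ0 (m0 + k))) := by
    intro k
    induction k with
    | zero =>
      have h0 : (Wl m0).drop (u0.length + m0) = [] := by
        rw [← hWlen m0]; exact List.drop_length
      show A.runList (A.muHat (x + 1) (ρ0 m0)) ((Wl m0).drop (u0.length + m0))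
        = some (A.muHat (x + 1) (ρ0 m0))
      rw [h0]
      rfl
    | succ k ih =>
      rw [show m0 + (k + 1) = (m0 + k) + 1 from rfl,
        hdrop (u0.length + m0) (m0 + k) (by omega)]
      exact hsnoc _ _ _ _ _ ih (hδx10 (m0 + k) (by omega))
  -- key reset lemma
  have hreset : ∀ n, m0 ≤ n → A.layerOf (ρ n) (w n) = x →
      x + 1 ≤ A.layer (ρ (n + 1)) ∧
      ∃ sp : ℕ × Q, sp.1 ≤ u0.length + m0 ∧
        A.runList sp.2 ((Wl (n + 1)).drop sp.1) = some (A.muHat (x + 1) (ρ (n + 1))) := by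
    intro n hn hpx
    have hlay0' : x + 1 ≤ A.layer (ρ0 (n + 1)) := hlayρ0' (n + 1) (by omega)
    set rc := A.muHat (x + 1) (ρ0 (n + 1)) with hrc
    have hrclay : A.layer rc = x + 1 := aux_layer_muHat A (by omega) hlay0'
    have hmurc : A.μ rc = A.muHat x (ρ0 (n + 1)) := aux_mu_muHat A hlay0'
    have hstep := hρ.2 n
    have hδρx : A.δ (A.muHat x (ρ n)) (w n) = some (A.muHat x (ρ (n + 1))) :=
      aux_semStep_proj A hstep hx1 (by rw [hpx])
    have hδeq : A.δ (A.muHat x (ρ n)) (w n) = some (A.muHat x (ρ0 (n + 1))) := by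
      rw [(hinv n).2]; exact hδx0 n
    have hxx : A.muHat x (ρ (n + 1)) = A.muHat x (ρ0 (n + 1)) := by
      rw [hδρx] at hδeq
      exact Option.some.inj hδeq
    have hlayn1 : x + 1 ≤ A.layer (ρ (n + 1)) := by
      by_contra hc
      push_neg at hc
      have hge : x ≤ A.layer (ρ (n + 1)) := (hinv (n + 1)).1
      have hself : A.muHat x (ρ (n + 1)) = ρ (n + 1) := aux_muHat_self A (by omega)
      refine hstep.1 rc (by rw [hrclay]; omega) ?_
      rw [hmurc, ← hxx, hself]
    -- candidate leaf above rc
    obtain ⟨l, hlleaf, hlge, hlmu⟩ := aux_leaf_above A rc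
    rw [hrclay] at hlge hlmu
    have hlx : A.muHat x l = A.muHat x (ρ0 (n + 1)) := by
      rw [← hmurc, ← hlmu]
      exact (aux_mu_muHat A hlge).symm
    have hcand : A.semStep (ρ n) (w n) l := by
      refine ⟨hlleaf, ?_⟩
      rw [hpx, hlx, hδeq]
    have hodd' : Odd (A.semPrio (ρ n) (w n)) := by rw [hsem, hpx]; exact hodd
    have hchoice : ρ (n + 1) = σ (List.ofFn fun j : Fin n => (ρ j, w j)) (ρ n) (w n) :=
      hcons n hodd'
    have hineq := hσ.2 (List.ofFn fun j : Fin n => (ρ j, w j)) (ρ n) (w n) hodd' l hcand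
    have hword : u0 ++ (List.ofFn fun j : Fin n => (ρ j, w j)).map Prod.snd ++ [w n]
        = Wl (n + 1) := by
      rw [List.map_ofFn]
      show u0 ++ (List.ofFn fun j : Fin n => w j) ++ [w n] = u0 ++ wordPrefix w (n + 1)
      rw [aux_wordPrefix_succ]
      simp [wordPrefix, List.append_assoc]
    rw [hsem, hpx, hword, hlmu, ← hchoice] at hineq
    have hlb : n + 1 - m0 ≤ A.longestSuffixLen (Wl (n + 1)) rc := by
      apply aux_lsl_ge A (by rw [hWlen]; omega)
      have hdr : (Wl (n + 1)).length - (n + 1 - m0) = u0.length + m0 := by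
        rw [hWlen]; omega
      rw [hdr]
      refine ⟨A.muHat (x + 1) (ρ0 m0), ?_, ?_⟩
      · rw [hrclay]
        exact aux_layer_muHat A (by omega) (hlayρ0' m0 le_rfl)
      · have := hthread0 (n + 1 - m0)
        rw [show m0 + (n + 1 - m0) = n + 1 by omega] at this
        exact this
    have hg : n + 1 - m0 ≤ A.longestSuffixLen (Wl (n + 1)) (A.muHat (x + 1) (ρ (n + 1))) :=
      le_trans hlb hineq
    obtain ⟨hL1, p_, hp_lay, hp_run⟩ := aux_lsl_spec A (Wl (n + 1)) (A.muHat (x + 1) (ρ (n + 1)))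
    refine ⟨hlayn1, ⟨(Wl (n + 1)).length - A.longestSuffixLen (Wl (n + 1))
      (A.muHat (x + 1) (ρ (n + 1))), p_⟩, ?_, hp_run⟩
    rw [hWlen]
    omega
  -- suppose priorities drop to x infinitely often
  by_contra hcon
  push_neg at hcon
  have hT : ∀ N, ∃ n, N ≤ n ∧ m0 ≤ n ∧ A.layerOf (ρ n) (w n) = x := by
    intro N
    obtain ⟨n, hn1, hn2⟩ := hcon (max N m0)
    rw [hsem] at hn2
    have := hprge n
    exact ⟨n, le_trans (le_max_left _ _) hn1, le_trans (le_max_right _ _) hn1, by omega⟩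
  set T : Set ℕ := {n | m0 ≤ n ∧ A.layerOf (ρ n) (w n) = x} with hTdef
  have hTinf : T.Infinite := by
    apply Set.infinite_of_not_bddAbove
    rintro ⟨b, hb⟩
    obtain ⟨n, hn1, hn2, hn3⟩ := hT (b + 1)
    have := hb (Set.mem_setOf.2 ⟨hn2, hn3⟩)
    omega
  have hNQ : Nonempty Q := ⟨p⟩
  set F : ℕ → ℕ × Q := fun n =>
    if h : m0 ≤ n ∧ A.layerOf (ρ n) (w n) = x then (hreset n h.1 h.2).2.choose
    else (0, p) with hF
  have hFspec : ∀ n, m0 ≤ n → A.layerOf (ρ n) (w n) = x →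
      (F n).1 ≤ u0.length + m0 ∧
      A.runList (F n).2 ((Wl (n + 1)).drop (F n).1) = some (A.muHat (x + 1) (ρ (n + 1))) := by
    intro n h1 h2
    rw [hF]
    simp only [dif_pos (And.intro h1 h2)]
    exact (hreset n h1 h2).2.choose_spec
  have hmap : Set.MapsTo F T ((Set.Iic (u0.length + m0)) ×ˢ (Set.univ : Set Q)) := by
    rintro n ⟨h1, h2⟩
    exact ⟨(hFspec n h1 h2).1, Set.mem_univ _⟩
  have hfin : ((Set.Iic (u0.length + m0)) ×ˢ (Set.univ : Set Q)).Finite :=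
    (Set.finite_Iic _).prod Set.finite_univ
  obtain ⟨a, ha, b, hb, hab, hFab⟩ := hTinf.exists_ne_map_eq_of_mapsTo hmap hfin
  -- the key contradiction: two resets with equal thread data
  have key : ∀ a b : ℕ, a ∈ T → b ∈ T → a < b → F a = F b → False := by
    intro a b haT hbT hlt hFeq
    obtain ⟨ham, hapx⟩ := haT
    obtain ⟨hbm, hbpx⟩ := hbT
    obtain ⟨hs_le, halive⟩ := hFspec a ham hapx
    have hlayera1 : x + 1 ≤ A.layer (ρ (a + 1)) := (hreset a ham hapx).1
    have hex : ∃ m, a < m ∧ m0 ≤ m ∧ A.layerOf (ρ m) (w m) = x := ⟨b, hlt, hbm, hbpx⟩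
    set n' := Nat.find hex with hn'def
    have hn'spec := Nat.find_spec hex
    rw [← hn'def] at hn'spec
    obtain ⟨hn'a, hn'm, hn'px⟩ := hn'spec
    have hn'le : n' ≤ b := by
      rw [hn'def]; exact Nat.find_min' hex ⟨hlt, hbm, hbpx⟩
    -- follow the thread up to n'
    have hfollow : ∀ k, a + 1 + k ≤ n' →
        x + 1 ≤ A.layer (ρ (a + 1 + k)) ∧
        A.runList (F a).2 ((Wl (a + 1 + k)).drop (F a).1)
          = some (A.muHat (x + 1) (ρ (a + 1 + k))) := by
      intro k
      induction k with
      | zero => intro _; exact ⟨hlayera1, halive⟩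
      | succ k ih =>
        intro hk
        obtain ⟨ihl, ihr⟩ := ih (by omega)
        set m := a + 1 + k with hm
        have hmlt : m < n' := by omega
        have hnotreset := Nat.find_min hex (show m < Nat.find hex by rw [← hn'def]; exact hmlt)
        have hpx' : A.layerOf (ρ m) (w m) ≠ x := by
          intro hc
          exact hnotreset ⟨by omega, by omega, hc⟩
        have hge : x + 1 ≤ A.layerOf (ρ m) (w m) := by
          have := hprge m
          omega
        have hstepm := hρ.2 m
        have hproj : A.δ (A.muHat (x + 1) (ρ m)) (w m)
            = some (A.muHat (x + 1) (ρ (m + 1))) :=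
          aux_semStep_proj A hstepm (by omega) hge
        constructor
        · exact le_trans hge (aux_semStep_layer A hstepm)
        · rw [show a + 1 + (k + 1) = m + 1 from rfl,
            hdrop (F a).1 m (by omega)]
          exact hsnoc _ _ _ _ _ ihr hproj
    have hfol := hfollow (n' - (a + 1)) (by omega)
    rw [show a + 1 + (n' - (a + 1)) = n' by omega] at hfol
    obtain ⟨hlayn', hrun_n'⟩ := hfol
    have hδnone : A.δ (A.muHat (x + 1) (ρ n')) (w n') = none :=
      aux_layerOf_none A (by omega) hlayn'
    have hdead : A.runList (F a).2 ((Wl (n' + 1)).drop (F a).1) = none := by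
      rw [hdrop (F a).1 n' (by omega)]
      exact hsnoc_none _ _ _ _ hrun_n' hδnone
    have hdeadM : ∀ M, n' + 1 ≤ M → A.runList (F a).2 ((Wl M).drop (F a).1) = none := by
      intro M hM
      induction M with
      | zero => omega
      | succ M ihM =>
        by_cases hM' : n' + 1 ≤ M
        · rw [hdrop (F a).1 M (by omega)]
          exact happ_none _ _ _ (ihM hM')
        · have : M = n' := by omega
          rw [this]
          exact hdead
    obtain ⟨_, hbalive⟩ := hFspec b hbm hbpx
    rw [← hFeq] at hbalive
    rw [hdeadM (b + 1) (by omega)] at hbalive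
    cases hbalive
  rcases Nat.lt_or_ge a b with h | h
  · exact key a b ha hb h hFab
  · exact key b a hb ha (by omega) hFab.symm
end
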